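/- arXiv:1307.7760 — 7 statements merged into one kernel-verified Lean document; each statement's English description precedes it below -/
import Mathlib

section
/- For every probability measure μ on ℝ^d, the squared kernel distance to μ is 1-semiconcave: the map x ↦ (d^K_μ(x))² − ‖x‖² is concave on ℝ^d. -/
open MeasureTheory

noncomputable def gaussK {d : ℕ} (σ : ℝ) (p x : EuclideanSpace ℝ (Fin d)) : ℝ :=
  σ ^ 2 * Real.exp (-‖p - x‖ ^ 2 / (2 * σ ^ 2))

noncomputable def kap {d : ℕ} (σ : ℝ) (μ ν : Measure (EuclideanSpace ℝ (Fin d))) : ℝ :=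
  ∫ p, ∫ q, gaussK σ p q ∂ν ∂μ

noncomputable def DK {d : ℕ} (σ : ℝ) (μ ν : Measure (EuclideanSpace ℝ (Fin d))) : ℝ :=
  Real.sqrt (kap σ μ μ + kap σ ν ν - 2 * kap σ μ ν)

/-- kernel distance from a measure to a point -/
noncomputable def dKmu {d : ℕ} (σ : ℝ) (μ : Measure (EuclideanSpace ℝ (Fin d)))
    (x : EuclideanSpace ℝ (Fin d)) : ℝ :=
  DK σ μ (Measure.dirac x)

open Real Set

namespace KernelAux

variable {d : ℕ}

local notation "E" => EuclideanSpace ℝ (Fin d)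

noncomputable def gg (b : ℝ) (w : E) : ℝ := Real.exp (-b * ‖w‖ ^ 2)

lemma gg_pos (b : ℝ) (w : E) : 0 < gg b w := Real.exp_pos _

lemma gg_le_one {b : ℝ} (hb : 0 ≤ b) (w : E) : gg b w ≤ 1 := by
  rw [gg, Real.exp_le_one_iff]
  nlinarith [sq_nonneg ‖w‖]

lemma norm_gg (b : ℝ) (w : E) : ‖gg b w‖ = gg b w := norm_of_nonneg (gg_pos b w).le

lemma gg_cont (b : ℝ) : Continuous (gg (d := d) b) := by
  unfold gg; fun_prop

lemma gg_symm (b : ℝ) (v u : E) : gg b (v - u) = gg b (u - v) := by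
  rw [gg, gg, norm_sub_rev]

lemma integrable_gg {b : ℝ} (hb : 0 < b) : Integrable (gg (d := d) b) := by
  have h := (GaussianFourier.integrable_cexp_neg_mul_sq_norm_add (V := E) (b := (b : ℂ))
    (by simpa using hb) 0 0).norm
  refine h.congr (Filter.Eventually.of_forall fun v => ?_)
  show ‖Complex.exp _‖ = _
  rw [Complex.norm_exp, gg]
  norm_num
  left
  norm_cast

noncomputable def Ig (d : ℕ) (b : ℝ) : ℝ := ∫ w : EuclideanSpace ℝ (Fin d), gg b w

lemma Ig_pos {b : ℝ} (hb : 0 < b) : 0 < Ig d b := by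
  rw [Ig]
  simp_rw [gg]
  rw [GaussianFourier.integral_rexp_neg_mul_sq_norm hb]
  positivity


lemma gg_conv {b : ℝ} (hb : 0 < b) (p q : E) :
    ∫ w : E, gg b (p - w) * gg b (q - w) = Ig d (2 * b) * Real.exp (-(b / 2) * ‖p - q‖ ^ 2) := by
  have hpt : ∀ w : E, gg b (p - w) * gg b (q - w)
      = Real.exp (-(b / 2) * ‖p - q‖ ^ 2) * gg (2 * b) (w - (2⁻¹ : ℝ) • (p + q)) := by
    intro w
    rw [gg, gg, gg, ← Real.exp_add, ← Real.exp_add]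
    congr 1
    have hpar := parallelogram_law_with_norm ℝ (p - w) (q - w)
    have h1 : p - w + (q - w) = (-2 : ℝ) • (w - (2⁻¹ : ℝ) • (p + q)) := by module
    have h2 : p - w - (q - w) = p - q := by abel
    rw [h1, h2, norm_smul] at hpar
    simp only [norm_neg, Real.norm_ofNat, norm_ofNat] at hpar
    nlinarith [hpar]
  simp_rw [hpt]
  rw [MeasureTheory.integral_const_mul]
  rw [integral_sub_right_eq_self (gg (2 * b)) ((2⁻¹ : ℝ) • (p + q))]
  rw [mul_comm, Ig]


noncomputable def Hm (b : ℝ) (μ : Measure E) (w : E) : ℝ := ∫ p, gg b (p - w) ∂μ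

lemma integrable_gg_shift {b : ℝ} (hb : 0 ≤ b) (μ : Measure E) [IsFiniteMeasure μ] (w : E) :
    Integrable (fun p => gg b (p - w)) μ := by
  refine Integrable.mono' (integrable_const 1)
    (((gg_cont b).comp (continuous_id.sub continuous_const)).aestronglyMeasurable) ?_
  exact Filter.Eventually.of_forall fun p => by rw [norm_gg]; exact gg_le_one hb _

lemma Hm_nonneg (b : ℝ) (μ : Measure E) (w : E) : 0 ≤ Hm b μ w :=
  integral_nonneg fun p => (gg_pos _ _).le

lemma Hm_le {b : ℝ} (hb : 0 ≤ b) (μ : Measure E) [IsFiniteMeasure μ] (w : E) :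
    Hm b μ w ≤ (μ univ).toReal := by
  have := integral_mono (integrable_gg_shift hb μ w) (integrable_const (1 : ℝ))
    (fun p => gg_le_one hb _)
  simpa [Hm, measureReal_def] using this

lemma Hm_meas (b : ℝ) (μ : Measure E) [SFinite μ] : StronglyMeasurable (Hm b μ) := by
  apply MeasureTheory.StronglyMeasurable.integral_prod_right
    (f := fun (w : E) (p : E) => gg b (p - w))
  exact ((gg_cont b).comp (continuous_snd.sub continuous_fst)).stronglyMeasurable

lemma Hm_integrable {b : ℝ} (hb : 0 < b) (μ : Measure E) [IsFiniteMeasure μ] :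
    Integrable (Hm b μ) volume := by
  have hm : AEStronglyMeasurable (fun z : E × E => gg b (z.1 - z.2)) (μ.prod volume) :=
    Continuous.aestronglyMeasurable
      (by exact (gg_cont b).comp (continuous_fst.sub continuous_snd))
  have hf : Integrable (fun z : E × E => gg b (z.1 - z.2)) (μ.prod volume) := by
    rw [integrable_prod_iff hm]
    simp only [Function.uncurry_apply_pair]
    constructor
    · refine Filter.Eventually.of_forall fun p => ?_
      simp_rw [gg_symm b p]
      exact (integrable_gg hb).comp_sub_right p
    · have he : (fun p : E => ∫ w, ‖gg b (p - w)‖) = fun p : E => Ig d b := by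
        funext p
        simp_rw [norm_gg, gg_symm b p]
        exact integral_sub_right_eq_self (gg b) p
      rw [he]
      exact integrable_const _
  exact hf.integral_prod_right

lemma Hm_mul_integrable {b : ℝ} (hb : 0 < b) (μ ν : Measure E) [IsFiniteMeasure μ]
    [IsFiniteMeasure ν] : Integrable (fun w => Hm b μ w * Hm b ν w) volume := by
  refine Integrable.mono' (((Hm_integrable hb μ).const_mul (ν univ).toReal))
    ((Hm_meas b μ).mul (Hm_meas b ν)).aestronglyMeasurable ?_
  refine Filter.Eventually.of_forall fun w => ?_
  rw [Real.norm_of_nonneg (mul_nonneg (Hm_nonneg _ _ _) (Hm_nonneg _ _ _))]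
  calc Hm b μ w * Hm b ν w ≤ Hm b μ w * (ν univ).toReal :=
        mul_le_mul_of_nonneg_left (Hm_le hb.le ν w) (Hm_nonneg _ _ _)
    _ = (ν univ).toReal * Hm b μ w := mul_comm _ _


lemma step_B {b : ℝ} (hb : 0 < b) (ν : Measure E) [IsFiniteMeasure ν] (p : E) :
    ∫ w : E, gg b (p - w) * Hm b ν w
      = Ig d (2 * b) * ∫ q, Real.exp (-(b / 2) * ‖p - q‖ ^ 2) ∂ν := by
  have h1 : ∀ w : E, gg b (p - w) * Hm b ν w = ∫ q, gg b (p - w) * gg b (q - w) ∂ν := by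
    intro w
    rw [Hm, ← MeasureTheory.integral_const_mul]
  simp_rw [h1]
  have hint : Integrable (Function.uncurry fun (w q : E) => gg b (p - w) * gg b (q - w))
      (volume.prod ν) := by
    have hm : AEStronglyMeasurable (Function.uncurry fun (w q : E) => gg b (p - w) * gg b (q - w))
        (volume.prod ν) := by
      apply Continuous.aestronglyMeasurable
      exact ((gg_cont b).comp (continuous_const.sub continuous_fst)).mul
        ((gg_cont b).comp (continuous_snd.sub continuous_fst))
    rw [integrable_prod_iff hm]
    simp only [Function.uncurry_apply_pair]
    constructor
    · exact Filter.Eventually.of_forall fun w =>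
        ((integrable_gg_shift hb.le ν w).const_mul _)
    · have he : (fun w : E => ∫ q, ‖gg b (p - w) * gg b (q - w)‖ ∂ν)
          = fun w : E => gg b (p - w) * Hm b ν w := by
        funext w
        simp_rw [norm_of_nonneg (mul_nonneg (gg_pos _ _).le (gg_pos _ _).le)]
        rw [MeasureTheory.integral_const_mul]
        rfl
      rw [he]
      have hdom : Integrable (fun w : E => (ν univ).toReal * gg b (w - p)) volume :=
        ((integrable_gg hb).comp_sub_right p).const_mul _
      refine hdom.mono' (((gg_cont b).comp
        (continuous_const.sub continuous_id)).aestronglyMeasurable.mul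
          (Hm_meas b ν).aestronglyMeasurable) ?_
      refine Filter.Eventually.of_forall fun w => ?_
      rw [Real.norm_of_nonneg (mul_nonneg (gg_pos _ _).le (Hm_nonneg _ _ _))]
      rw [gg_symm b p w]
      calc gg b (w - p) * Hm b ν w ≤ gg b (w - p) * (ν univ).toReal :=
            mul_le_mul_of_nonneg_left (Hm_le hb.le ν w) (gg_pos _ _).le
        _ = (ν univ).toReal * gg b (w - p) := mul_comm _ _
  rw [integral_integral_swap hint]
  have h2 : ∀ q : E, (∫ w : E, gg b (p - w) * gg b (q - w))
      = Ig d (2 * b) * Real.exp (-(b / 2) * ‖p - q‖ ^ 2) := fun q => gg_conv hb p q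
  simp_rw [h2]
  rw [MeasureTheory.integral_const_mul]

lemma integral_Hm_mul {b : ℝ} (hb : 0 < b) (μ ν : Measure E) [IsFiniteMeasure μ]
    [IsFiniteMeasure ν] :
    ∫ w : E, Hm b μ w * Hm b ν w
      = Ig d (2 * b) * ∫ p, (∫ q, Real.exp (-(b / 2) * ‖p - q‖ ^ 2) ∂ν) ∂μ := by
  have h1 : ∀ w : E, Hm b μ w * Hm b ν w = ∫ p, gg b (p - w) * Hm b ν w ∂μ := by
    intro w
    rw [Hm, ← MeasureTheory.integral_mul_const]
  simp_rw [h1]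
  have hint : Integrable (Function.uncurry fun (w p : E) => gg b (p - w) * Hm b ν w)
      (volume.prod μ) := by
    have hm : AEStronglyMeasurable (Function.uncurry fun (w p : E) => gg b (p - w) * Hm b ν w)
        (volume.prod μ) := by
      refine AEStronglyMeasurable.mul ?_ ?_
      · exact Continuous.aestronglyMeasurable
          ((gg_cont b).comp (continuous_snd.sub continuous_fst))
      · exact ((Hm_meas b ν).comp_measurable measurable_fst).aestronglyMeasurable
    rw [integrable_prod_iff hm]
    simp only [Function.uncurry_apply_pair]
    constructor
    · exact Filter.Eventually.of_forall fun w =>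
        ((integrable_gg_shift hb.le μ w).mul_const _)
    · have he : (fun w : E => ∫ p, ‖gg b (p - w) * Hm b ν w‖ ∂μ)
          = fun w : E => Hm b μ w * Hm b ν w := by
        funext w
        simp_rw [norm_of_nonneg (mul_nonneg (gg_pos _ _).le (Hm_nonneg _ _ _))]
        rw [MeasureTheory.integral_mul_const]
        rfl
      rw [he]
      exact Hm_mul_integrable hb μ ν
  rw [integral_integral_swap hint]
  have h2 : ∀ p : E, (∫ w : E, gg b (p - w) * Hm b ν w)
      = Ig d (2 * b) * ∫ q, Real.exp (-(b / 2) * ‖p - q‖ ^ 2) ∂ν := fun p => step_B hb ν p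
  simp_rw [h2]
  rw [MeasureTheory.integral_const_mul]


lemma kap_eq {σ : ℝ} (hσ : 0 < σ) (μ ν : Measure E) [IsFiniteMeasure μ] [IsFiniteMeasure ν] :
    kap σ μ ν = (σ ^ 2 / Ig d (2 * (σ ^ 2)⁻¹))
      * ∫ w : E, Hm (σ ^ 2)⁻¹ μ w * Hm (σ ^ 2)⁻¹ ν w := by
  have hb : (0 : ℝ) < (σ ^ 2)⁻¹ := by positivity
  have hIg : 0 < Ig d (2 * (σ ^ 2)⁻¹) := Ig_pos (by positivity)
  have hk : kap σ μ ν
      = σ ^ 2 * ∫ p, (∫ q, Real.exp (-((σ ^ 2)⁻¹ / 2) * ‖p - q‖ ^ 2) ∂ν) ∂μ := by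
    rw [kap]
    have hgk : ∀ p q : E, gaussK σ p q
        = σ ^ 2 * Real.exp (-((σ ^ 2)⁻¹ / 2) * ‖p - q‖ ^ 2) := by
      intro p q
      have hexp : -‖p - q‖ ^ 2 / (2 * σ ^ 2) = -((σ ^ 2)⁻¹ / 2) * ‖p - q‖ ^ 2 := by
        have hne : (σ : ℝ) ^ 2 ≠ 0 := by positivity
        field_simp
      rw [gaussK, hexp]
    simp_rw [hgk, MeasureTheory.integral_const_mul]
  rw [hk, integral_Hm_mul hb μ ν]
  generalize (∫ p, (∫ q, Real.exp (-((σ ^ 2)⁻¹ / 2) * ‖p - q‖ ^ 2) ∂ν) ∂μ) = T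
  generalize hI : Ig d (2 * (σ ^ 2)⁻¹) = I at hIg ⊢
  field_simp

lemma two_kap_le {σ : ℝ} (hσ : 0 < σ) (μ ν : Measure E) [IsFiniteMeasure μ]
    [IsFiniteMeasure ν] : 2 * kap σ μ ν ≤ kap σ μ μ + kap σ ν ν := by
  have hb : (0 : ℝ) < (σ ^ 2)⁻¹ := by positivity
  have hIg : 0 < Ig d (2 * (σ ^ 2)⁻¹) := Ig_pos (by positivity)
  set b := (σ ^ 2)⁻¹ with hbdef
  have hc : (0 : ℝ) ≤ σ ^ 2 / Ig d (2 * b) := by positivity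
  rw [kap_eq hσ μ ν, kap_eq hσ μ μ, kap_eq hσ ν ν]
  have hmono : 2 * ∫ w : E, Hm b μ w * Hm b ν w
      ≤ (∫ w : E, Hm b μ w * Hm b μ w) + ∫ w : E, Hm b ν w * Hm b ν w := by
    rw [← MeasureTheory.integral_const_mul,
      ← MeasureTheory.integral_add (Hm_mul_integrable hb μ μ) (Hm_mul_integrable hb ν ν)]
    refine integral_mono_of_nonneg ?_
      ((Hm_mul_integrable hb μ μ).add (Hm_mul_integrable hb ν ν)) ?_
    · exact Filter.Eventually.of_forall fun w =>
        mul_nonneg (by norm_num) (mul_nonneg (Hm_nonneg _ _ _) (Hm_nonneg _ _ _))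
    · refine Filter.Eventually.of_forall fun w => ?_
      have := sq_nonneg (Hm b μ w - Hm b ν w)
      simp only [Pi.add_apply]
      nlinarith
  nlinarith [mul_le_mul_of_nonneg_left hmono hc]


lemma integrable_gaussK {σ : ℝ} (hσ : 0 < σ) (μ : Measure E) [IsFiniteMeasure μ] (x : E) :
    Integrable (fun p => gaussK σ p x) μ := by
  have h : ∀ p : E, gaussK σ p x = σ ^ 2 * gg ((σ ^ 2)⁻¹ / 2) (p - x) := by
    intro p
    have hexp : -‖p - x‖ ^ 2 / (2 * σ ^ 2) = -((σ ^ 2)⁻¹ / 2) * ‖p - x‖ ^ 2 := by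
      have hne : (σ : ℝ) ^ 2 ≠ 0 := by positivity
      field_simp
    rw [gaussK, hexp, gg]
  simp_rw [h]
  exact (integrable_gg_shift (by positivity) μ x).const_mul _

section OneDim

variable {c : ℝ}

lemma g1_hasDeriv (hc : 0 < c) (t : ℝ) :
    HasDerivAt (fun t : ℝ => c * Real.exp (-t / c) + t) (1 - Real.exp (-t / c)) t := by
  have h1 : HasDerivAt (fun t : ℝ => -t / c) (-1 / c) t := (hasDerivAt_id t).neg.div_const c
  have h3 := (h1.exp.const_mul c).add (hasDerivAt_id t)
  have h4 : 1 - Real.exp (-t / c) = c * (Real.exp (-t / c) * (-1 / c)) + 1 := by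
    rw [mul_comm c, mul_assoc, div_mul_cancel₀ _ hc.ne']
    ring
  rw [h4]
  exact h3

lemma g1_convexOn (hc : 0 < c) :
    ConvexOn ℝ (Ici 0) (fun t : ℝ => c * Real.exp (-t / c) + t) := by
  have hderiv : deriv (fun t : ℝ => c * Real.exp (-t / c) + t)
      = fun t => 1 - Real.exp (-t / c) := funext fun t => (g1_hasDeriv hc t).deriv
  refine convexOn_of_deriv2_nonneg (convex_Ici 0) ?_ ?_ ?_ ?_
  · exact Continuous.continuousOn (by fun_prop)
  · exact fun t _ => ((g1_hasDeriv hc t).differentiableAt).differentiableWithinAt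
  · rw [hderiv]
    intro t _
    refine DifferentiableAt.differentiableWithinAt ?_
    fun_prop
  · intro t _
    rw [Function.iterate_succ, Function.iterate_one, Function.comp_apply, hderiv]
    have h2 : ∀ s : ℝ, HasDerivAt (fun t : ℝ => 1 - Real.exp (-t / c))
        (Real.exp (-s / c) / c) s := by
      intro s
      have h1 : HasDerivAt (fun t : ℝ => -t / c) (-1 / c) s := (hasDerivAt_id s).neg.div_const c
      have := (hasDerivAt_const s (1 : ℝ)).sub h1.exp
      have h5 : Real.exp (-s / c) / c = 0 - Real.exp (-s / c) * (-1 / c) := by ring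
      rw [h5]
      exact this
    rw [(h2 t).deriv]
    positivity

lemma g1_monotoneOn (hc : 0 < c) :
    MonotoneOn (fun t : ℝ => c * Real.exp (-t / c) + t) (Ici 0) := by
  refine monotoneOn_of_deriv_nonneg (convex_Ici 0) (Continuous.continuousOn (by fun_prop))
    (fun t _ => ((g1_hasDeriv hc t).differentiableAt).differentiableWithinAt) ?_
  intro t ht
  rw [interior_Ici] at ht
  rw [(g1_hasDeriv hc t).deriv]
  have : Real.exp (-t / c) ≤ 1 := by
    rw [Real.exp_le_one_iff]
    have ht' : (0 : ℝ) < t := ht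
    have h1 : 0 ≤ t / c := by positivity
    rw [neg_div]
    linarith
  linarith

end OneDim

lemma convexOn_norm_sub (p : E) : ConvexOn ℝ univ (fun x : E => ‖x - p‖) := by
  refine ⟨convex_univ, fun x _ y _ a b ha hb hab => ?_⟩
  have hp : a • x + b • y - p = a • (x - p) + b • (y - p) := by
    have h1 : a • x + b • y - p = a • x + b • y - (a + b) • p := by rw [hab, one_smul]
    rw [h1, add_smul, smul_sub, smul_sub]
    abel
  show ‖a • x + b • y - p‖ ≤ a • ‖x - p‖ + b • ‖y - p‖
  rw [hp]
  calc ‖a • (x - p) + b • (y - p)‖ ≤ ‖a • (x - p)‖ + ‖b • (y - p)‖ := norm_add_le _ _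
    _ = a * ‖x - p‖ + b * ‖y - p‖ := by
        rw [norm_smul, norm_smul, Real.norm_of_nonneg ha, Real.norm_of_nonneg hb]
    _ = a • ‖x - p‖ + b • ‖y - p‖ := by simp [smul_eq_mul]

lemma convexOn_norm_sub_sq (p : E) : ConvexOn ℝ univ (fun x : E => ‖x - p‖ ^ 2) := by
  refine ⟨convex_univ, fun x _ y _ a b ha hb hab => ?_⟩
  have hp : a • x + b • y - p = a • (x - p) + b • (y - p) := by
    have h1 : a • x + b • y - p = a • x + b • y - (a + b) • p := by rw [hab, one_smul]
    rw [h1, add_smul, smul_sub, smul_sub]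
    abel
  show ‖a • x + b • y - p‖ ^ 2 ≤ a • ‖x - p‖ ^ 2 + b • ‖y - p‖ ^ 2
  rw [hp]
  have h1 : ‖a • (x - p) + b • (y - p)‖ ≤ a * ‖x - p‖ + b * ‖y - p‖ := by
    calc ‖a • (x - p) + b • (y - p)‖ ≤ ‖a • (x - p)‖ + ‖b • (y - p)‖ := norm_add_le _ _
      _ = a * ‖x - p‖ + b * ‖y - p‖ := by
          rw [norm_smul, norm_smul, Real.norm_of_nonneg ha, Real.norm_of_nonneg hb]
  have h2 : ‖a • (x - p) + b • (y - p)‖ ^ 2 ≤ (a * ‖x - p‖ + b * ‖y - p‖) ^ 2 :=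
    pow_le_pow_left₀ (norm_nonneg _) h1 2
  simp only [smul_eq_mul]
  nlinarith [h2, mul_nonneg (mul_nonneg ha hb) (sq_nonneg (‖x - p‖ - ‖y - p‖))]

lemma image_norm_sub_sq (hd : 1 ≤ d) (p : E) :
    (fun x : E => ‖x - p‖ ^ 2) '' univ = Ici 0 := by
  apply subset_antisymm
  · rintro t ⟨x, -, rfl⟩
    simpa using sq_nonneg ‖x - p‖
  · intro t ht
    refine ⟨p + Real.sqrt t • EuclideanSpace.single (⟨0, hd⟩ : Fin d) (1 : ℝ), mem_univ _, ?_⟩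
    show ‖p + Real.sqrt t • EuclideanSpace.single (⟨0, hd⟩ : Fin d) (1 : ℝ) - p‖ ^ 2 = t
    rw [add_sub_cancel_left, norm_smul, EuclideanSpace.norm_single]
    simp only [norm_one, mul_one, Real.norm_eq_abs, abs_of_nonneg (Real.sqrt_nonneg t)]
    exact Real.sq_sqrt ht

lemma convexOn_point {σ : ℝ} (hd : 1 ≤ d) (hσ : 0 < σ) (p : E) :
    ConvexOn ℝ univ (fun x : E => 2 * gaussK σ p x + ‖x‖ ^ 2) := by
  have hc : (0 : ℝ) < 2 * σ ^ 2 := by positivity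
  set c : ℝ := 2 * σ ^ 2 with hcdef
  set f : ℝ → ℝ := fun t => c * Real.exp (-t / c) + t with hfdef
  have hrepr : (fun x : E => 2 * gaussK σ p x + ‖x‖ ^ 2)
      = fun x : E => f (‖x - p‖ ^ 2) + (2 * (inner ℝ x p : ℝ) - ‖p‖ ^ 2) := by
    funext x
    have hsq : ‖x - p‖ ^ 2 = ‖x‖ ^ 2 - 2 * (inner ℝ x p : ℝ) + ‖p‖ ^ 2 := by
      rw [@norm_sub_sq_real]
    have hnorm : ‖p - x‖ = ‖x - p‖ := norm_sub_rev p x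
    rw [gaussK, hnorm, hfdef]
    simp only
    rw [hsq, hcdef]
    ring_nf
  have h1 : ConvexOn ℝ univ fun x : E => f (‖x - p‖ ^ 2) := by
    have hcvx : ConvexOn ℝ ((fun x : E => ‖x - p‖ ^ 2) '' univ) f := by
      rw [image_norm_sub_sq hd p]; exact g1_convexOn hc
    have hmono : MonotoneOn f ((fun x : E => ‖x - p‖ ^ 2) '' univ) := by
      rw [image_norm_sub_sq hd p]; exact g1_monotoneOn hc
    exact hcvx.comp (convexOn_norm_sub_sq p) hmono
  have h2 : ConvexOn ℝ univ fun x : E => 2 * (inner ℝ x p : ℝ) - ‖p‖ ^ 2 := by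
    refine ⟨convex_univ, fun x _ y _ a b ha hb hab => le_of_eq ?_⟩
    simp only [smul_eq_mul]
    rw [inner_add_left, real_inner_smul_left, real_inner_smul_left]
    linear_combination (‖p‖ ^ 2) * hab
  rw [hrepr]
  exact h1.add h2

lemma convexOn_integral {μ : Measure E} {F : E → E → ℝ}
    (hF : ∀ p, ConvexOn ℝ univ (F p)) (hInt : ∀ x, Integrable (fun p => F p x) μ) :
    ConvexOn ℝ univ fun x => ∫ p, F p x ∂μ := by
  refine ⟨convex_univ, fun x _ y _ a b ha hb hab => ?_⟩
  have hx := hInt x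
  have hy := hInt y
  simp only [smul_eq_mul]
  calc ∫ p, F p (a • x + b • y) ∂μ ≤ ∫ p, (a * F p x + b * F p y) ∂μ := by
        refine integral_mono (hInt _) ((hx.const_mul a).add (hy.const_mul b)) fun p => ?_
        have := (hF p).2 (mem_univ x) (mem_univ y) ha hb hab
        simpa [smul_eq_mul] using this
    _ = a * ∫ p, F p x ∂μ + b * ∫ p, F p y ∂μ := by
        rw [integral_add (hx.const_mul a) (hy.const_mul b), MeasureTheory.integral_const_mul,
          MeasureTheory.integral_const_mul]

end KernelAux

open KernelAux in
/-- The squared kernel distance to a probability measure is 1-semiconcave: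
`x ↦ (d^K_μ(x))² − ‖x‖²` is concave on `ℝ^d`. -/
theorem kernel_distance_sq_semiconcave {d : ℕ} (hd : 1 ≤ d) (σ : ℝ) (hσ : 0 < σ)
    (μ : Measure (EuclideanSpace ℝ (Fin d))) [IsProbabilityMeasure μ] :
    ConcaveOn ℝ Set.univ (fun x : EuclideanSpace ℝ (Fin d) => dKmu σ μ x ^ 2 - ‖x‖ ^ 2) := by

  have hδσ : ∀ x : EuclideanSpace ℝ (Fin d),
      kap σ (Measure.dirac x) (Measure.dirac x) = σ ^ 2 := by
    intro x
    rw [kap, integral_dirac, integral_dirac, gaussK]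
    simp
  have hμδ : ∀ x : EuclideanSpace ℝ (Fin d),
      kap σ μ (Measure.dirac x) = ∫ p, gaussK σ p x ∂μ := by
    intro x
    rw [kap]
    simp_rw [integral_dirac]
  have hnn : ∀ x : EuclideanSpace ℝ (Fin d),
      0 ≤ kap σ μ μ + kap σ (Measure.dirac x) (Measure.dirac x)
        - 2 * kap σ μ (Measure.dirac x) := by
    intro x
    have := two_kap_le hσ μ (Measure.dirac x)
    linarith
  have hsq : ∀ x : EuclideanSpace ℝ (Fin d),
      dKmu σ μ x ^ 2 = kap σ μ μ + σ ^ 2 - 2 * ∫ p, gaussK σ p x ∂μ := by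
    intro x
    rw [dKmu, DK, Real.sq_sqrt (hnn x), hδσ x, hμδ x]
  have hconv : ConvexOn ℝ Set.univ
      fun x : EuclideanSpace ℝ (Fin d) => 2 * (∫ p, gaussK σ p x ∂μ) + ‖x‖ ^ 2 := by
    have hpt : ∀ x : EuclideanSpace ℝ (Fin d),
        2 * (∫ p, gaussK σ p x ∂μ) + ‖x‖ ^ 2
          = ∫ p, (2 * gaussK σ p x + ‖x‖ ^ 2) ∂μ := by
      intro x
      rw [integral_add ((integrable_gaussK hσ μ x).const_mul 2) (integrable_const _),
        MeasureTheory.integral_const_mul, integral_const]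
      simp
    simp_rw [hpt]
    exact convexOn_integral (fun p => convexOn_point hd hσ p)
      (fun x => ((integrable_gaussK hσ μ x).const_mul 2).add (integrable_const _))
  have heq : (fun x : EuclideanSpace ℝ (Fin d) => dKmu σ μ x ^ 2 - ‖x‖ ^ 2)
      = fun x => -(2 * (∫ p, gaussK σ p x ∂μ) + ‖x‖ ^ 2) + (kap σ μ μ + σ ^ 2) := by
    funext x
    rw [hsq x]
    ring
  rw [heq]
  exact hconv.neg.add_const _
end

section
/- Let ℓ ≥ 1 be a real number and let g : ℝ^d → ℝ be twice continuously differentiable. If g² is ℓ-semiconcave, i.e. the map x ↦ (g(x))² − ℓ‖x‖² is concave on ℝ^d, then g is ℓ-Lipschitz: |g(x) − g(y)| ≤ ℓ·‖x − y‖ for all x, y ∈ ℝ^d. -/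
open MeasureTheory Set

lemma concave_tangent' {ψ : ℝ → ℝ} (hψ : ConcaveOn ℝ Set.univ ψ) (hd : Differentiable ℝ ψ)
    (s t : ℝ) : ψ t ≤ ψ s + deriv ψ s * (t - s) := by
  rcases lt_trichotomy t s with h | h | h
  · have := hψ.deriv_le_slope (mem_univ t) (mem_univ s) h (hd s)
    rw [slope_def_field] at this
    have hst : 0 < s - t := by linarith
    nlinarith [(le_div_iff₀ hst).mp this]
  · simp [h]
  · have := hψ.slope_le_deriv (mem_univ s) (mem_univ t) h (hd s)
    rw [slope_def_field] at this
    have hst : 0 < t - s := by linarith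
    nlinarith [(div_le_iff₀ hst).mp this]

set_option maxHeartbeats 1000000 in
/-- If `ℓ ≥ 1` and `g : ℝ^d → ℝ` is twice continuously differentiable with `g²`
`ℓ`-semiconcave (i.e. `x ↦ g(x)² − ℓ‖x‖²` is concave), then `g` is `ℓ`-Lipschitz. -/
theorem semiconcave_implies_lipschitz {d : ℕ} (hd : 1 ≤ d) (ℓ : ℝ) (hℓ : 1 ≤ ℓ)
    (g : EuclideanSpace ℝ (Fin d) → ℝ) (hg : ContDiff ℝ 2 g)
    (hconc : ConcaveOn ℝ Set.univ (fun x : EuclideanSpace ℝ (Fin d) => g x ^ 2 - ℓ * ‖x‖ ^ 2)) :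
    ∀ x y : EuclideanSpace ℝ (Fin d), |g x - g y| ≤ ℓ * ‖x - y‖ := by
  intro x y
  set v := y - x with hv
  set c := ℓ * ‖v‖ ^ 2 with hc
  have hℓ0 : (0:ℝ) ≤ ℓ := by linarith
  have hc0 : 0 ≤ c := by positivity
  set φ : ℝ → ℝ := fun t => g (x + t • v) with hφdef
  set ψ : ℝ → ℝ := fun t => φ t ^ 2 - c * t ^ 2 with hψdef
  -- differentiability
  have hgdiff : Differentiable ℝ g := hg.differentiable (by norm_num)
  have hA : Differentiable ℝ (fun t : ℝ => x + t • v) :=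
    (differentiable_id.smul_const v).const_add x
  have hφdiff : Differentiable ℝ φ := hgdiff.comp hA
  have hψdiff : Differentiable ℝ ψ := by
    apply Differentiable.sub
    · exact hφdiff.pow 2
    · exact (differentiable_id.pow 2).const_mul c
  -- concavity of ψ
  have hψconc : ConcaveOn ℝ Set.univ ψ := by
    refine ⟨convex_univ, ?_⟩
    intro p _ q _ a b ha hb hab
    simp only [hψdef, hφdef, smul_eq_mul]
    set P := x + p • v with hP
    set Q := x + q • v with hQ
    have hPQ : a • P + b • Q = x + (a * p + b * q) • v := by
      rw [hP, hQ]
      have hb' : b = 1 - a := by linarith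
      subst hb'
      module
    have hcmb := hconc.2 (mem_univ P) (mem_univ Q) ha hb hab
    simp only [smul_eq_mul] at hcmb
    rw [hPQ] at hcmb
    have e1 : ‖a • P + b • Q‖ ^ 2
        = a ^ 2 * ‖P‖ ^ 2 + 2 * (a * b) * (inner ℝ P Q : ℝ) + b ^ 2 * ‖Q‖ ^ 2 := by
      rw [@norm_add_sq_real, norm_smul, norm_smul, real_inner_smul_left, real_inner_smul_right,
        Real.norm_eq_abs, Real.norm_eq_abs, abs_of_nonneg ha, abs_of_nonneg hb]
      ring
    have e2 : ‖P‖ ^ 2 - 2 * (inner ℝ P Q : ℝ) + ‖Q‖ ^ 2 = (p - q) ^ 2 * ‖v‖ ^ 2 := by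
      rw [← @norm_sub_sq_real]
      have hs : P - Q = (p - q) • v := by rw [hP, hQ]; module
      rw [hs, norm_smul, mul_pow, Real.norm_eq_abs, sq_abs]
    rw [hPQ] at e1
    have key : a * (ℓ * ‖P‖ ^ 2) + b * (ℓ * ‖Q‖ ^ 2) - ℓ * ‖x + (a * p + b * q) • v‖ ^ 2
        = c * (a * p ^ 2 + b * q ^ 2) - c * (a * p + b * q) ^ 2 := by
      rw [e1, hc]
      have hb' : b = 1 - a := by linarith
      subst hb'
      linear_combination (ℓ * a * (1 - a)) * e2
    nlinarith [hcmb, key]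
  -- deriv of ψ
  have hψderiv : ∀ s : ℝ, deriv ψ s = 2 * φ s * deriv φ s - 2 * c * s := by
    intro s
    have h1 : HasDerivAt (fun t => φ t ^ 2) (2 * φ s * deriv φ s) s := by
      have := ((hφdiff s).hasDerivAt.pow 2)
      simp at this; exact this
    have h2 : HasDerivAt (fun t : ℝ => c * t ^ 2) (c * (2 * s)) s := by
      have := (hasDerivAt_pow 2 s).const_mul c
      simpa using this
    have := (h1.sub h2).deriv
    rw [show ψ = ((fun t => φ t ^ 2) - fun t : ℝ => c * t ^ 2) from rfl, this]; ring
  -- tangent inequality for ψ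
  have htan : ∀ s t : ℝ, φ t ^ 2 ≤ φ s ^ 2 + 2 * φ s * deriv φ s * (t - s) + c * (t - s) ^ 2 := by
    intro s t
    have := concave_tangent' hψconc hψdiff s t
    rw [hψderiv s] at this
    simp only [hψdef] at this
    nlinarith [this]
  have hφ0 : φ 0 = g x := by simp [hφdef]
  have hφ1 : φ 1 = g y := by simp [hφdef, hv]
  clear_value φ ψ c v
  clear hψdef hφdef hψconc hψdiff hψderiv hconc hg hgdiff hA
  -- discriminant bound
  have hdisc : ∀ s : ℝ, (φ s * deriv φ s) ^ 2 ≤ c * φ s ^ 2 := by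
    intro s
    have hquad : ∀ r : ℝ, 0 ≤ c * (r * r) + (2 * φ s * deriv φ s) * r + φ s ^ 2 := by
      intro r
      have := htan s (s + r)
      have h0 : 0 ≤ φ (s + r) ^ 2 := sq_nonneg _
      simp only [add_sub_cancel_left] at this
      nlinarith
    have hd2 := discrim_le_zero hquad
    rw [discrim] at hd2
    nlinarith [hd2]
  -- |φ s * deriv φ s| ≤ √c * |φ s|
  have habs : ∀ s : ℝ, |φ s * deriv φ s| ≤ Real.sqrt c * |φ s| := by
    intro s
    have h1 : |φ s * deriv φ s| = Real.sqrt ((φ s * deriv φ s) ^ 2) :=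
      (Real.sqrt_sq_eq_abs _).symm
    rw [h1]
    calc Real.sqrt ((φ s * deriv φ s) ^ 2) ≤ Real.sqrt (c * φ s ^ 2) :=
          Real.sqrt_le_sqrt (hdisc s)
      _ = Real.sqrt c * |φ s| := by
          rw [Real.sqrt_mul hc0, Real.sqrt_sq_eq_abs]
  -- |φ| is √c-Lipschitz
  have hlip : ∀ s t : ℝ, |φ t| ≤ |φ s| + Real.sqrt c * |t - s| := by
    intro s t
    have h1 : φ t ^ 2 ≤ (|φ s| + Real.sqrt c * |t - s|) ^ 2 := by
      have h2 := htan s t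
      have h3 : 2 * φ s * deriv φ s * (t - s) ≤ 2 * (Real.sqrt c * |φ s|) * |t - s| := by
        calc 2 * φ s * deriv φ s * (t - s) ≤ |2 * φ s * deriv φ s * (t - s)| := le_abs_self _
          _ = 2 * |φ s * deriv φ s| * |t - s| := by
              simp only [abs_mul, abs_two]; ring
          _ ≤ 2 * (Real.sqrt c * |φ s|) * |t - s| := by
              have := habs s
              have h4 : (0:ℝ) ≤ |t - s| := abs_nonneg _
              nlinarith
      have h5 : c * (t - s) ^ 2 = (Real.sqrt c * |t - s|) ^ 2 := by
        rw [mul_pow, Real.sq_sqrt hc0, sq_abs]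
      nlinarith [h2, h3, h5, sq_abs (φ s)]
    have h6 : 0 ≤ |φ s| + Real.sqrt c * |t - s| := by positivity
    calc |φ t| = Real.sqrt (φ t ^ 2) := (Real.sqrt_sq_eq_abs _).symm
      _ ≤ Real.sqrt ((|φ s| + Real.sqrt c * |t - s|) ^ 2) := Real.sqrt_le_sqrt h1
      _ = |φ s| + Real.sqrt c * |t - s| := Real.sqrt_sq h6
  -- conclude |φ 0 - φ 1| ≤ √c
  have hmain : |φ 0 - φ 1| ≤ Real.sqrt c := by
    rcases le_or_gt 0 (φ 0 * φ 1) with hsgn | hsgn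
    · have h1 := hlip 1 0
      have h2 := hlip 0 1
      simp only [zero_sub, sub_zero, abs_neg, abs_one] at h1 h2
      rw [abs_sub_le_iff]
      rcases mul_nonneg_iff.mp hsgn with ⟨h01, h02⟩ | ⟨h01, h02⟩
      · rw [abs_of_nonneg h01, abs_of_nonneg h02] at h1 h2
        constructor <;> linarith
      · rw [abs_of_nonpos h01, abs_of_nonpos h02] at h1 h2
        constructor <;> linarith
    · -- opposite signs: IVT
      have hcont : ContinuousOn φ (uIcc (0:ℝ) 1) := hφdiff.continuous.continuousOn
      have hmem : (0:ℝ) ∈ uIcc (φ 0) (φ 1) := by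
        rcases mul_neg_iff.mp hsgn with ⟨h01, h02⟩ | ⟨h01, h02⟩
        · exact mem_uIcc.mpr (Or.inr ⟨le_of_lt h02, le_of_lt h01⟩)
        · exact mem_uIcc.mpr (Or.inl ⟨le_of_lt h01, le_of_lt h02⟩)
      obtain ⟨z, hz, hφz⟩ := intermediate_value_uIcc hcont hmem
      rw [uIcc_of_le (zero_le_one)] at hz
      have hz0 : 0 ≤ z := hz.1
      have hz1 : z ≤ 1 := hz.2
      have h1 := hlip z 0
      have h2 := hlip z 1
      rw [hφz] at h1 h2
      simp only [abs_zero, zero_add] at h1 h2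
      have e0 : |(0:ℝ) - z| = z := by rw [abs_of_nonpos (by linarith), neg_sub]; ring_nf
      have e1 : |(1:ℝ) - z| = 1 - z := abs_of_nonneg (by linarith)
      rw [e0] at h1
      rw [e1] at h2
      have : |φ 0 - φ 1| ≤ |φ 0| + |φ 1| := abs_sub _ _
      nlinarith [Real.sqrt_nonneg c]
  -- finish
  have hsc : Real.sqrt c ≤ ℓ * ‖x - y‖ := by
    rw [hc, hv]
    have h1 : Real.sqrt (ℓ * ‖y - x‖ ^ 2) = Real.sqrt ℓ * ‖y - x‖ := by
      rw [Real.sqrt_mul hℓ0, Real.sqrt_sq (norm_nonneg _)]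
    rw [h1, norm_sub_rev y x]
    have h2 : Real.sqrt ℓ ≤ ℓ := by
      have : Real.sqrt ℓ ≤ Real.sqrt (ℓ ^ 2) := Real.sqrt_le_sqrt (by nlinarith)
      rwa [Real.sqrt_sq hℓ0] at this
    exact mul_le_mul_of_nonneg_right h2 (norm_nonneg _)
  rw [← hφ0, ← hφ1]
  exact le_trans hmain hsc
end

section
/- For every probability measure μ on ℝ^d, the kernel distance to μ is 1-Lipschitz: |d^K_μ(x) − d^K_μ(y)| ≤ ‖x − y‖ for all x, y ∈ ℝ^d. -/
open MeasureTheory Real RealInnerProductSpace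


noncomputable def kde {d : ℕ} (σ : ℝ) (μ : Measure (EuclideanSpace ℝ (Fin d)))
    (x : EuclideanSpace ℝ (Fin d)) : ℝ :=
  ∫ p, gaussK σ p x ∂μ

/-- kernel distance between two points -/
noncomputable def DKpt {d : ℕ} (σ : ℝ) (p q : EuclideanSpace ℝ (Fin d)) : ℝ :=
  DK σ (Measure.dirac p) (Measure.dirac q)

/-- kernel power distance with respect to a finite nonempty point set `P` -/
noncomputable def Kpow {d : ℕ} (σ : ℝ) (P : Finset (EuclideanSpace ℝ (Fin d)))
    (hP : P.Nonempty) (μ : Measure (EuclideanSpace ℝ (Fin d)))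
    (x : EuclideanSpace ℝ (Fin d)) : ℝ :=
  Real.sqrt (P.inf' hP fun p => DKpt σ p x ^ 2 + dKmu σ μ p ^ 2)

noncomputable def phi {d : ℕ} (σ : ℝ) (x z : EuclideanSpace ℝ (Fin d)) : ℝ :=
  (σ / Real.sqrt ((π * σ ^ 2 / 2) ^ ((d:ℝ) / 2))) * Real.exp (-(σ ^ 2)⁻¹ * ‖z - x‖ ^ 2)
variable {d : ℕ}
local notation "E" => EuclideanSpace ℝ (Fin d)

lemma integrable_gauss {b : ℝ} (hb : 0 < b) (x : E) :
    Integrable (fun z : E => Real.exp (-b * ‖z - x‖ ^ 2)) := by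
  have h := (GaussianFourier.integrable_cexp_neg_mul_sq_norm_add (V := E)
    (b := (b:ℂ)) (by simpa using hb) 0 (0 : E)).norm
  have h2 : Integrable (fun v : E => Real.exp (-b * ‖v‖ ^ 2)) :=
    h.congr (Filter.Eventually.of_forall fun v => by
      simp [Complex.norm_exp, ← Complex.ofReal_pow])
  exact h2.comp_sub_right x

lemma phi_mul_integral (σ : ℝ) (hσ : 0 < σ) (x y : E) :
    ∫ z : E, phi σ x z * phi σ y z = gaussK σ x y := by
  set b : ℝ := (σ ^ 2)⁻¹ with hbdef
  have hb : 0 < b := by positivity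
  set c : ℝ := (π * σ ^ 2 / 2) ^ ((d:ℝ) / 2) with hcdef
  have hc : 0 < c := by positivity
  set a : ℝ := σ / Real.sqrt c with hadef
  have key : ∀ z : E, phi σ x z * phi σ y z
      = a ^ 2 * Real.exp (-b * (‖z - x‖ ^ 2 + ‖z - y‖ ^ 2)) := by
    intro z
    rw [phi, phi, ← hbdef, ← hcdef, ← hadef]
    rw [mul_mul_mul_comm, ← Real.exp_add]
    ring_nf
  simp_rw [key]
  rw [MeasureTheory.integral_const_mul]
  set m : E := (2:ℝ)⁻¹ • (x + y) with hm
  set u : E := (2:ℝ)⁻¹ • (x - y) with hu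
  have htrans := MeasureTheory.integral_add_right_eq_self
    (μ := (volume : Measure E)) (fun z => Real.exp (-b * (‖z - x‖ ^ 2 + ‖z - y‖ ^ 2))) m
  rw [← htrans]
  have hpt : ∀ z : E, Real.exp (-b * (‖z + m - x‖ ^ 2 + ‖z + m - y‖ ^ 2))
      = Real.exp (-(2*b) * ‖z‖ ^ 2) * Real.exp (-b * ‖x - y‖ ^ 2 / 2) := by
    intro z
    have h1 : z + m - x = z - u := by
      rw [hm, hu]; module
    have h2 : z + m - y = z + u := by
      rw [hm, hu]; module
    have hpar := parallelogram_law_with_norm ℝ z u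
    have hun : ‖u‖ ^ 2 = ‖x - y‖ ^ 2 / 4 := by
      rw [hu, norm_smul]
      simp [norm_inv]
      ring
    rw [h1, h2, ← Real.exp_add]
    congr 1
    have h3 : ‖z - u‖ ^ 2 + ‖z + u‖ ^ 2 = 2 * (‖z‖ ^ 2 + ‖u‖ ^ 2) := by
      have hp := parallelogram_law_with_norm ℝ z u
      simp only [pow_two]
      linarith
    rw [h3, hun]
    ring
  simp_rw [hpt]
  rw [MeasureTheory.integral_mul_const]
  rw [GaussianFourier.integral_rexp_neg_mul_sq_norm (by positivity : (0:ℝ) < 2*b),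
    finrank_euclideanSpace_fin]
  have hca : π / (2 * b) = π * σ ^ 2 / 2 := by
    rw [hbdef]; field_simp
  rw [hca, ← hcdef]
  have ha2 : a ^ 2 = σ ^ 2 / c := by
    rw [hadef, div_pow, Real.sq_sqrt hc.le]
  rw [ha2, gaussK]
  have : -b * ‖x - y‖ ^ 2 / 2 = -‖x - y‖ ^ 2 / (2 * σ ^ 2) := by
    rw [hbdef]; ring
  rw [this, mul_comm c (rexp _), div_mul_eq_mul_div, ← mul_assoc, mul_div_assoc,
    div_self hc.ne', mul_one]

lemma phi_continuous (σ : ℝ) (x : E) : Continuous (phi σ x) := by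
  unfold phi; fun_prop

lemma phi_memℒp (σ : ℝ) (hσ : 0 < σ) (x : E) :
    MemLp (phi σ x) 2 (volume : Measure E) := by
  rw [memLp_two_iff_integrable_sq (phi_continuous σ x).aestronglyMeasurable]
  have h : ∀ z : E, phi σ x z ^ 2
      = (σ / Real.sqrt ((π * σ ^ 2 / 2) ^ ((d:ℝ) / 2))) ^ 2
        * Real.exp (-(2 * (σ ^ 2)⁻¹) * ‖z - x‖ ^ 2) := by
    intro z
    rw [phi, mul_pow, ← Real.exp_nat_mul]
    ring_nf
  simp_rw [h]
  exact (integrable_gauss (by positivity) x).const_mul _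

noncomputable def Phi (σ : ℝ) (hσ : 0 < σ) (x : E) : Lp ℝ 2 (volume : Measure E) :=
  (phi_memℒp σ hσ x).toLp (phi σ x)

lemma Phi_inner (σ : ℝ) (hσ : 0 < σ) (x y : E) :
    (inner ℝ (Phi σ hσ x) (Phi σ hσ y) : ℝ) = gaussK σ x y := by
  rw [L2.inner_def, ← phi_mul_integral σ hσ x y]
  apply integral_congr_ae
  filter_upwards [(phi_memℒp σ hσ x).coeFn_toLp, (phi_memℒp σ hσ y).coeFn_toLp] with z h1 h2
  rw [RCLike.inner_apply]
  simp [Phi, h1, h2, mul_comm]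

lemma Phi_norm_sub (σ : ℝ) (hσ : 0 < σ) (x y : E) :
    ‖Phi σ hσ x - Phi σ hσ y‖ ≤ ‖x - y‖ := by
  have hsq : ‖Phi σ hσ x - Phi σ hσ y‖ ^ 2 ≤ ‖x - y‖ ^ 2 := by
    rw [← real_inner_self_eq_norm_sq, inner_sub_sub_self]
    rw [real_inner_comm (Phi σ hσ y) (Phi σ hσ x)]
    rw [Phi_inner, Phi_inner, Phi_inner]
    have hxx : gaussK σ x x = σ ^ 2 := by simp [gaussK]
    have hyy : gaussK σ y y = σ ^ 2 := by simp [gaussK]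
    rw [hxx, hyy, gaussK]
    set s : ℝ := ‖x - y‖ ^ 2 / (2 * σ ^ 2) with hs
    have hs0 : 0 ≤ s := by positivity
    have hexp : 1 - Real.exp (-s) ≤ s := by
      have := Real.add_one_le_exp (-s); linarith
    have hgoal : σ ^ 2 - 2 * (σ ^ 2 * Real.exp (-s)) + σ ^ 2
        = 2 * σ ^ 2 * (1 - Real.exp (-s)) := by ring
    have h2 : 2 * σ ^ 2 * s = ‖x - y‖ ^ 2 := by
      rw [hs]; field_simp
    have : -‖x - y‖ ^ 2 / (2 * σ ^ 2) = -s := by rw [hs]; ring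
    rw [show ‖y - x‖ = ‖x - y‖ from norm_sub_rev y x, this]
    have hm := mul_le_mul_of_nonneg_left hexp (by positivity : (0:ℝ) ≤ 2 * σ ^ 2)
    linarith
  have h1 := Real.sqrt_le_sqrt hsq
  rwa [Real.sqrt_sq (norm_nonneg _), Real.sqrt_sq (norm_nonneg _)] at h1

lemma Phi_lipschitz (σ : ℝ) (hσ : 0 < σ) : LipschitzWith 1 (Phi (d := d) σ hσ) := by
  refine LipschitzWith.of_dist_le_mul fun x y => ?_
  rw [dist_eq_norm, dist_eq_norm]
  simpa using Phi_norm_sub σ hσ x y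

lemma Phi_norm (σ : ℝ) (hσ : 0 < σ) (x : E) : ‖Phi σ hσ x‖ = σ := by
  have h : ‖Phi σ hσ x‖ ^ 2 = σ ^ 2 := by
    rw [← real_inner_self_eq_norm_sq, Phi_inner]
    simp [gaussK]
  nlinarith [norm_nonneg (Phi σ hσ x)]

set_option synthInstance.maxHeartbeats 1000000 in
set_option maxHeartbeats 1000000 in
lemma Phi_integrable (σ : ℝ) (hσ : 0 < σ) (ν : Measure E) [IsProbabilityMeasure ν] :
    Integrable (fun p => Phi σ hσ p) ν := by
  refine Integrable.mono' (integrable_const σ)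
    ((Phi_lipschitz σ hσ).continuous.aestronglyMeasurable) ?_
  filter_upwards with p
  rw [Phi_norm]

noncomputable def T (σ : ℝ) (hσ : 0 < σ) (ν : Measure E) : Lp ℝ 2 (volume : Measure E) :=
  ∫ p, Phi σ hσ p ∂ν

lemma T_dirac (σ : ℝ) (hσ : 0 < σ) (x : E) : T σ hσ (Measure.dirac x) = Phi σ hσ x := by
  rw [T, integral_dirac]

lemma kap_eq (σ : ℝ) (hσ : 0 < σ) (μ ν : Measure E)
    [IsProbabilityMeasure μ] [IsProbabilityMeasure ν] :
    kap σ μ ν = (inner ℝ (T σ hσ μ) (T σ hσ ν) : ℝ) := by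
  rw [kap]
  have h1 : ∀ p : E, ∫ q, gaussK σ p q ∂ν = (inner ℝ (Phi σ hσ p) (T σ hσ ν) : ℝ) := by
    intro p
    rw [T, ← integral_inner (Phi_integrable σ hσ ν) (Phi σ hσ p)]
    exact integral_congr_ae (Filter.Eventually.of_forall fun q => (Phi_inner σ hσ p q).symm)
  simp_rw [h1]
  have h2 : ∀ p : E, (inner ℝ (Phi σ hσ p) (T σ hσ ν) : ℝ) = inner ℝ (T σ hσ ν) (Phi σ hσ p) :=
    fun p => real_inner_comm _ _
  simp_rw [h2]
  rw [integral_inner (Phi_integrable σ hσ μ), ← T, real_inner_comm]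

lemma dKmu_eq (σ : ℝ) (hσ : 0 < σ) (μ : Measure E) [IsProbabilityMeasure μ] (x : E) :
    dKmu σ μ x = ‖T σ hσ μ - Phi σ hσ x‖ := by
  rw [dKmu, DK, kap_eq σ hσ μ μ, kap_eq σ hσ μ (Measure.dirac x),
    kap_eq σ hσ (Measure.dirac x) (Measure.dirac x), T_dirac]
  have h : (inner ℝ (T σ hσ μ) (T σ hσ μ) : ℝ) + inner ℝ (Phi σ hσ x) (Phi σ hσ x)
      - 2 * inner ℝ (T σ hσ μ) (Phi σ hσ x)
      = inner ℝ (T σ hσ μ - Phi σ hσ x) (T σ hσ μ - Phi σ hσ x) := by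
    rw [inner_sub_sub_self, real_inner_comm (Phi σ hσ x) (T σ hσ μ)]; ring
  rw [h, real_inner_self_eq_norm_mul_norm, Real.sqrt_mul_self (norm_nonneg _)]

/-- The kernel distance to a probability measure is 1-Lipschitz:
`|d^K_μ(x) − d^K_μ(y)| ≤ ‖x − y‖` for all `x, y ∈ ℝ^d`. -/
theorem kernel_distance_lipschitz {d : ℕ} (hd : 1 ≤ d) (σ : ℝ) (hσ : 0 < σ)
    (μ : Measure (EuclideanSpace ℝ (Fin d))) [IsProbabilityMeasure μ] :
    ∀ x y : EuclideanSpace ℝ (Fin d), |dKmu σ μ x - dKmu σ μ y| ≤ ‖x - y‖ := by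
  intro x y
  rw [dKmu_eq σ hσ μ x, dKmu_eq σ hσ μ y]
  have h1 := abs_norm_sub_norm_le (T σ hσ μ - Phi σ hσ x) (T σ hσ μ - Phi σ hσ y)
  have h2 : (T σ hσ μ - Phi σ hσ x) - (T σ hσ μ - Phi σ hσ y) = Phi σ hσ y - Phi σ hσ x := by
    abel
  rw [h2] at h1
  refine h1.trans ?_
  rw [norm_sub_rev]
  exact Phi_norm_sub σ hσ x y
end

section
/- For any probability measure μ on ℝ^d, any finite nonempty set P ⊆ ℝ^d, and any point x ∈ ℝ^d, D_K(μ, δ_x) ≤ √2 · Kpow_P(μ,x). -/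
open MeasureTheory

open Real
set_option linter.unusedSectionVars false

namespace KPD

noncomputable def phiG {d : ℕ} (σ : ℝ) (p u : EuclideanSpace ℝ (Fin d)) : ℝ :=
  Real.exp (-(σ ^ 2)⁻¹ * ‖p - u‖ ^ 2)

lemma phiG_nonneg {d : ℕ} (σ : ℝ) (p u : EuclideanSpace ℝ (Fin d)) : 0 ≤ phiG σ p u :=
  (Real.exp_pos _).le

lemma phiG_le_one {d : ℕ} (σ : ℝ) (p u : EuclideanSpace ℝ (Fin d)) : phiG σ p u ≤ 1 := by
  rw [phiG, Real.exp_le_one_iff]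
  have : 0 ≤ (σ ^ 2)⁻¹ * ‖p - u‖ ^ 2 := by positivity
  linarith

lemma phiG_cont2 {d : ℕ} (σ : ℝ) :
    Continuous (fun pu : EuclideanSpace ℝ (Fin d) × EuclideanSpace ℝ (Fin d) =>
      phiG σ pu.1 pu.2) := by
  unfold phiG; fun_prop

lemma phiG_cont {d : ℕ} (σ : ℝ) (p : EuclideanSpace ℝ (Fin d)) :
    Continuous (fun u => phiG σ p u) := by
  unfold phiG; fun_prop

lemma phiG_cont' {d : ℕ} (σ : ℝ) (u : EuclideanSpace ℝ (Fin d)) :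
    Continuous (fun p => phiG σ p u) := by
  unfold phiG; fun_prop

lemma gauss_integrable {d : ℕ} {c : ℝ} (hc : 0 < c) :
    Integrable (fun v : EuclideanSpace ℝ (Fin d) => Real.exp (-c * ‖v‖ ^ 2)) := by
  have h := (GaussianFourier.integrable_cexp_neg_mul_sq_norm_add
    (V := EuclideanSpace ℝ (Fin d)) (b := (c:ℂ)) (by simpa using hc) 0 0).norm
  simpa [Complex.norm_exp, ← Complex.ofReal_pow] using h

lemma gauss_integrable_shift {d : ℕ} {c : ℝ} (hc : 0 < c) (p : EuclideanSpace ℝ (Fin d)) :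
    Integrable (fun u : EuclideanSpace ℝ (Fin d) => Real.exp (-c * ‖p - u‖ ^ 2)) := by
  have h := (gauss_integrable (d := d) hc).comp_sub_right p
  simpa [norm_sub_rev] using h

lemma gauss_shift_eq {d : ℕ} (c : ℝ) (p : EuclideanSpace ℝ (Fin d)) :
    ∫ u : EuclideanSpace ℝ (Fin d), Real.exp (-c * ‖p - u‖ ^ 2)
      = ∫ v : EuclideanSpace ℝ (Fin d), Real.exp (-c * ‖v‖ ^ 2) := by
  have h := integral_sub_right_eq_self
    (μ := (volume : Measure (EuclideanSpace ℝ (Fin d))))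
    (fun v => Real.exp (-c * ‖v‖ ^ 2)) p
  rw [← h]
  congr 1; funext u; rw [norm_sub_rev]

lemma phiG_integrable {d : ℕ} {σ : ℝ} (hσ : 0 < σ) (p : EuclideanSpace ℝ (Fin d)) :
    Integrable (fun u => phiG σ p u) := by
  have hc : (0:ℝ) < (σ ^ 2)⁻¹ := by positivity
  simpa [phiG, neg_mul] using gauss_integrable_shift hc p

noncomputable def I0 {d : ℕ} (σ : ℝ) : ℝ :=
  ∫ v : EuclideanSpace ℝ (Fin d), Real.exp (-(2 * (σ ^ 2)⁻¹) * ‖v‖ ^ 2)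

lemma I0_pos {d : ℕ} {σ : ℝ} (hσ : 0 < σ) : 0 < I0 (d := d) σ := by
  have hc : (0:ℝ) < 2 * (σ ^ 2)⁻¹ := by positivity
  rw [I0, GaussianFourier.integral_rexp_neg_mul_sq_norm hc]
  have : (0:ℝ) < π / (2 * (σ ^ 2)⁻¹) := by positivity
  positivity

lemma norm_id {d : ℕ} (p x u : EuclideanSpace ℝ (Fin d)) :
    ‖p - u‖ ^ 2 + ‖x - u‖ ^ 2
      = ‖p - x‖ ^ 2 / 2 + 2 * ‖((2:ℝ)⁻¹ • (p + x)) - u‖ ^ 2 := by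
  have h1 := norm_add_sq_real (p - u) (x - u)
  have h2 := norm_sub_sq_real (p - u) (x - u)
  have e1 : (p - u) + (x - u) = (2:ℝ) • (((2:ℝ)⁻¹ • (p + x)) - u) := by
    module
  have e2 : (p - u) - (x - u) = p - x := by abel
  rw [e1] at h1
  rw [e2] at h2
  have e3 : ‖(2:ℝ) • (((2:ℝ)⁻¹ • (p + x)) - u)‖ ^ 2
      = 4 * ‖((2:ℝ)⁻¹ • (p + x)) - u‖ ^ 2 := by
    rw [norm_smul]; norm_num; ring
  rw [e3] at h1
  linarith

lemma phiG_mul {d : ℕ} {σ : ℝ} (hσ : 0 < σ) (p x u : EuclideanSpace ℝ (Fin d)) :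
    phiG σ p u * phiG σ x u
      = Real.exp (-‖p - x‖ ^ 2 / (2 * σ ^ 2))
        * Real.exp (-(2 * (σ ^ 2)⁻¹) * ‖((2:ℝ)⁻¹ • (p + x)) - u‖ ^ 2) := by
  rw [phiG, phiG, ← Real.exp_add, ← Real.exp_add]
  congr 1
  have h := norm_id p x u
  set A := ‖p - u‖ ^ 2 with hA
  set B := ‖x - u‖ ^ 2 with hB
  set C := ‖p - x‖ ^ 2 with hC
  set D := ‖((2:ℝ)⁻¹ • (p + x)) - u‖ ^ 2 with hD
  have hs : (σ:ℝ) ^ 2 ≠ 0 := by positivity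
  linear_combination (-(σ^2)⁻¹) * h

lemma conv_eq {d : ℕ} {σ : ℝ} (hσ : 0 < σ) (p x : EuclideanSpace ℝ (Fin d)) :
    ∫ u, phiG σ p u * phiG σ x u
      = Real.exp (-‖p - x‖ ^ 2 / (2 * σ ^ 2)) * I0 (d := d) σ := by
  simp_rw [phiG_mul hσ p x]
  rw [integral_const_mul]
  congr 1
  have h := integral_sub_right_eq_self
    (μ := (volume : Measure (EuclideanSpace ℝ (Fin d))))
    (fun v => Real.exp (-(2 * (σ ^ 2)⁻¹) * ‖v‖ ^ 2)) ((2:ℝ)⁻¹ • (p + x))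
  rw [I0, ← h]
  congr 1; funext u; rw [norm_sub_rev]

section Meas
variable {d : ℕ} {σ : ℝ}
variable (μ : Measure (EuclideanSpace ℝ (Fin d))) [IsProbabilityMeasure μ]

/-- the smoothed density -/
noncomputable def Fm (σ : ℝ) (μ : Measure (EuclideanSpace ℝ (Fin d)))
    (u : EuclideanSpace ℝ (Fin d)) : ℝ := ∫ q, phiG σ q u ∂μ

lemma Fm_nonneg (u : EuclideanSpace ℝ (Fin d)) : 0 ≤ Fm σ μ u :=
  integral_nonneg fun q => phiG_nonneg σ q u

lemma phiG_integrable_mu (u : EuclideanSpace ℝ (Fin d)) :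
    Integrable (fun q => phiG σ q u) μ := by
  refine (integrable_const (1:ℝ)).mono' ((phiG_cont' σ u).aestronglyMeasurable) ?_
  exact ae_of_all _ fun q => by
    rw [Real.norm_eq_abs, abs_of_nonneg (phiG_nonneg σ q u)]; exact phiG_le_one σ q u

lemma Fm_le_one (u : EuclideanSpace ℝ (Fin d)) : Fm σ μ u ≤ 1 := by
  have h := integral_mono (phiG_integrable_mu μ u) (integrable_const (1:ℝ))
    (fun q => phiG_le_one σ q u)
  simpa [Fm] using h

lemma Fm_sm : StronglyMeasurable (Fm σ μ) := by
  exact StronglyMeasurable.integral_prod_left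
    (f := fun q u => phiG σ q u) ((phiG_cont2 σ).stronglyMeasurable)

lemma H_int_prod (hσ : 0 < σ) : Integrable (fun qu :
    EuclideanSpace ℝ (Fin d) × EuclideanSpace ℝ (Fin d) => phiG σ qu.1 qu.2)
    (μ.prod volume) := by
  rw [integrable_prod_iff ((phiG_cont2 σ).aestronglyMeasurable)]
  constructor
  · exact ae_of_all _ fun q => phiG_integrable (d := d) hσ q
  · have : (fun q : EuclideanSpace ℝ (Fin d) => ∫ u : EuclideanSpace ℝ (Fin d), ‖phiG σ q u‖)
        = fun _ => ∫ v : EuclideanSpace ℝ (Fin d),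
            Real.exp (-(σ ^ 2)⁻¹ * ‖v‖ ^ 2) := by
      funext q
      have h1 : (fun u => ‖phiG σ q u‖) = fun u => phiG σ q u := by
        funext u; rw [Real.norm_eq_abs, abs_of_nonneg (phiG_nonneg σ q u)]
      rw [h1]
      simpa [phiG, neg_mul] using gauss_shift_eq (d := d) ((σ ^ 2)⁻¹) q
    rw [this]
    exact integrable_const _
      
lemma Fm_int (hσ : 0 < σ) : Integrable (Fm σ μ) volume :=
  Integrable.integral_prod_right (H_int_prod μ hσ)

lemma mul_int_aux {f g : EuclideanSpace ℝ (Fin d) → ℝ} (hf : Integrable f volume)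
    (hg : AEStronglyMeasurable g volume) (hfn : ∀ u, 0 ≤ f u) (hgb : ∀ u, ‖g u‖ ≤ 1) :
    Integrable (fun u => f u * g u) volume := by
  refine hf.mono' (hf.aestronglyMeasurable.mul hg) (ae_of_all _ fun u => ?_)
  rw [norm_mul]
  calc ‖f u‖ * ‖g u‖ ≤ ‖f u‖ * 1 :=
        mul_le_mul_of_nonneg_left (hgb u) (norm_nonneg _)
    _ = f u := by rw [mul_one, Real.norm_eq_abs, abs_of_nonneg (hfn u)]

lemma int_phiphi (hσ : 0 < σ) (p x : EuclideanSpace ℝ (Fin d)) :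
    Integrable (fun u => phiG σ p u * phiG σ x u) volume :=
  mul_int_aux (phiG_integrable hσ p) ((phiG_cont σ x).aestronglyMeasurable)
    (phiG_nonneg σ p)
    (fun u => by rw [Real.norm_eq_abs, abs_of_nonneg (phiG_nonneg σ x u)]
                 exact phiG_le_one σ x u)

lemma int_Fphi (hσ : 0 < σ) (p : EuclideanSpace ℝ (Fin d)) :
    Integrable (fun u => Fm σ μ u * phiG σ p u) volume :=
  mul_int_aux (Fm_int μ hσ) ((phiG_cont σ p).aestronglyMeasurable) (Fm_nonneg μ)
    (fun u => by rw [Real.norm_eq_abs, abs_of_nonneg (phiG_nonneg σ p u)]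
                 exact phiG_le_one σ p u)

lemma int_FF (hσ : 0 < σ) : Integrable (fun u => Fm σ μ u * Fm σ μ u) volume :=
  mul_int_aux (Fm_int μ hσ) (Fm_sm μ).aestronglyMeasurable (Fm_nonneg μ)
    (fun u => by rw [Real.norm_eq_abs, abs_of_nonneg (Fm_nonneg μ u)]
                 exact Fm_le_one μ u)

end Meas
section Repr
variable {d : ℕ} {σ : ℝ}
variable (μ : Measure (EuclideanSpace ℝ (Fin d))) [IsProbabilityMeasure μ]

lemma gaussK_self (σ : ℝ) (p : EuclideanSpace ℝ (Fin d)) : gaussK σ p p = σ ^ 2 := by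
  simp [gaussK]

lemma gaussK_repr (hσ : 0 < σ) (p x : EuclideanSpace ℝ (Fin d)) :
    gaussK σ p x = (σ ^ 2 * (I0 (d := d) σ)⁻¹) * ∫ u, phiG σ p u * phiG σ x u := by
  rw [conv_eq hσ, gaussK]
  have h0 : I0 (d := d) σ ≠ 0 := (I0_pos hσ).ne'
  field_simp

lemma phiphi_self (hσ : 0 < σ) (p : EuclideanSpace ℝ (Fin d)) :
    ∫ u, phiG σ p u * phiG σ p u = I0 (d := d) σ := by
  rw [conv_eq hσ]
  simp

lemma dom_int (hσ : 0 < σ) {g : EuclideanSpace ℝ (Fin d) × EuclideanSpace ℝ (Fin d) → ℝ}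
    (hg : AEStronglyMeasurable g (μ.prod volume))
    (hb : ∀ z, ‖g z‖ ≤ phiG σ z.1 z.2) : Integrable g (μ.prod volume) :=
  (H_int_prod μ hσ).mono' hg (ae_of_all _ hb)

lemma bound_aux {a b : ℝ} (ha : 0 ≤ a) (hb1 : 0 ≤ b) (hb2 : b ≤ 1) : ‖b * a‖ ≤ a := by
  rw [Real.norm_eq_abs, abs_of_nonneg (by positivity)]
  nlinarith

lemma kde_repr (hσ : 0 < σ) (x : EuclideanSpace ℝ (Fin d)) :
    kde σ μ x = (σ ^ 2 * (I0 (d := d) σ)⁻¹) * ∫ u, Fm σ μ u * phiG σ x u := by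
  rw [kde]
  simp_rw [gaussK_repr hσ]
  rw [integral_const_mul]
  congr 1
  have hI : Integrable (Function.uncurry fun q u => phiG σ q u * phiG σ x u)
      (μ.prod volume) := by
    refine dom_int μ hσ ?_ ?_
    · exact ((phiG_cont2 σ).aestronglyMeasurable).mul
        (((phiG_cont σ x).comp continuous_snd).aestronglyMeasurable)
    · intro z
      simp only [Function.uncurry]
      rw [mul_comm]
      exact bound_aux (phiG_nonneg σ z.1 z.2) (phiG_nonneg σ x z.2) (phiG_le_one σ x z.2)
  rw [integral_integral_swap hI]
  congr 1; funext u
  rw [integral_mul_const]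
  rfl

lemma kap_repr (hσ : 0 < σ) :
    kap σ μ μ = (σ ^ 2 * (I0 (d := d) σ)⁻¹) * ∫ u, Fm σ μ u * Fm σ μ u := by
  rw [kap]
  have hsym : ∀ p q : EuclideanSpace ℝ (Fin d), gaussK σ p q = gaussK σ q p := by
    intro p q; rw [gaussK, gaussK, norm_sub_rev]
  have inner_eq : ∀ p, (∫ q, gaussK σ p q ∂μ) = kde σ μ p := by
    intro p; rw [kde]; congr 1; funext q; exact hsym p q
  simp_rw [inner_eq, kde_repr μ hσ]
  rw [integral_const_mul]
  congr 1
  have hI : Integrable (Function.uncurry fun p u => Fm σ μ u * phiG σ p u)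
      (μ.prod volume) := by
    refine dom_int μ hσ ?_ ?_
    · exact (((Fm_sm μ).comp_measurable measurable_snd).aestronglyMeasurable).mul
        ((phiG_cont2 σ).aestronglyMeasurable)
    · intro z
      simp only [Function.uncurry]
      exact bound_aux (phiG_nonneg σ z.1 z.2) (Fm_nonneg μ z.2) (Fm_le_one μ z.2)
  rw [integral_integral_swap hI]
  congr 1; funext u
  rw [integral_const_mul]
  rfl

lemma quad (hσ : 0 < σ) (α β γ : ℝ) (p x : EuclideanSpace ℝ (Fin d)) :
    0 ≤ α ^ 2 * kap σ μ μ + (β ^ 2 + γ ^ 2) * σ ^ 2 + 2 * α * β * kde σ μ p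
      + 2 * α * γ * kde σ μ x + 2 * β * γ * gaussK σ p x := by
  have hI0 := I0_pos (d := d) hσ
  have e1 := int_FF μ hσ
  have e2 := int_phiphi (d := d) hσ p p
  have e3 := int_phiphi (d := d) hσ x x
  have e4 := int_Fphi μ hσ p
  have e5 := int_Fphi μ hσ x
  have e6 := int_phiphi (d := d) hσ p x
  set F := Fm σ μ with hF
  set G : EuclideanSpace ℝ (Fin d) → ℝ :=
    fun u => α * F u + β * phiG σ p u + γ * phiG σ x u with hG
  have hfun : (fun u => G u * G u) = fun u =>
      α ^ 2 * (F u * F u) + (β ^ 2 * (phiG σ p u * phiG σ p u)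
        + (γ ^ 2 * (phiG σ x u * phiG σ x u)
        + ((2 * α * β) * (F u * phiG σ p u)
        + ((2 * α * γ) * (F u * phiG σ x u)
        + (2 * β * γ) * (phiG σ p u * phiG σ x u))))) := by
    funext u; simp only [hG]; ring
  have key : (∫ u, G u * G u)
      = α ^ 2 * (∫ u, F u * F u) + (β ^ 2 * (∫ u, phiG σ p u * phiG σ p u)
        + (γ ^ 2 * (∫ u, phiG σ x u * phiG σ x u)
        + ((2 * α * β) * (∫ u, F u * phiG σ p u)
        + ((2 * α * γ) * (∫ u, F u * phiG σ x u)
        + (2 * β * γ) * (∫ u, phiG σ p u * phiG σ x u))))) := by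
    have i5 : Integrable (fun u => (2 * α * γ) * (F u * phiG σ x u)
        + (2 * β * γ) * (phiG σ p u * phiG σ x u)) volume :=
      (e5.const_mul _).add (e6.const_mul _)
    have i4 : Integrable (fun u => (2 * α * β) * (F u * phiG σ p u)
        + ((2 * α * γ) * (F u * phiG σ x u)
        + (2 * β * γ) * (phiG σ p u * phiG σ x u))) volume :=
      (e4.const_mul _).add i5
    have i3 : Integrable (fun u => γ ^ 2 * (phiG σ x u * phiG σ x u)
        + ((2 * α * β) * (F u * phiG σ p u)
        + ((2 * α * γ) * (F u * phiG σ x u)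
        + (2 * β * γ) * (phiG σ p u * phiG σ x u)))) volume :=
      (e3.const_mul _).add i4
    have i2 : Integrable (fun u => β ^ 2 * (phiG σ p u * phiG σ p u)
        + (γ ^ 2 * (phiG σ x u * phiG σ x u)
        + ((2 * α * β) * (F u * phiG σ p u)
        + ((2 * α * γ) * (F u * phiG σ x u)
        + (2 * β * γ) * (phiG σ p u * phiG σ x u))))) volume :=
      (e2.const_mul _).add i3
    rw [hfun]
    rw [integral_add (e1.const_mul _) i2]
    rw [integral_add (e2.const_mul _) i3]
    rw [integral_add (e3.const_mul _) i4]
    rw [integral_add (e4.const_mul _) i5]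
    rw [integral_add (e5.const_mul _) (e6.const_mul _)]
    simp_rw [integral_const_mul]
  have hG0 : 0 ≤ ∫ u, G u * G u := integral_nonneg fun u => mul_self_nonneg _
  have hC : (0:ℝ) ≤ σ ^ 2 * (I0 (d := d) σ)⁻¹ := by positivity
  have final : α ^ 2 * kap σ μ μ + (β ^ 2 + γ ^ 2) * σ ^ 2 + 2 * α * β * kde σ μ p
      + 2 * α * γ * kde σ μ x + 2 * β * γ * gaussK σ p x
      = (σ ^ 2 * (I0 (d := d) σ)⁻¹) * ∫ u, G u * G u := by
    rw [key, phiphi_self hσ p, phiphi_self hσ x, kap_repr μ hσ, kde_repr μ hσ p,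
      kde_repr μ hσ x, gaussK_repr hσ p x]
    have h0 : I0 (d := d) σ ≠ 0 := hI0.ne'
    field_simp
    ring
  rw [final]
  exact mul_nonneg hC hG0

lemma kap_dirac_right (x : EuclideanSpace ℝ (Fin d)) :
    kap σ μ (Measure.dirac x) = kde σ μ x := by
  rw [kap, kde]
  congr 1; funext p
  exact integral_dirac (fun q => gaussK σ p q) x

lemma kap_dirac_dirac (p x : EuclideanSpace ℝ (Fin d)) :
    kap σ (Measure.dirac p) (Measure.dirac x) = gaussK σ p x := by
  rw [kap]
  rw [integral_dirac (fun p' => ∫ q, gaussK σ p' q ∂(Measure.dirac x)) p]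
  exact integral_dirac (fun q => gaussK σ p q) x

end Repr
end KPD

/-- Lower bound: `D_K(μ, δ_x) ≤ √2 · Kpow_P(μ,x)` for any finite nonempty `P` and any `x`. -/
theorem kernel_power_distance_lower {d : ℕ} (hd : 1 ≤ d) (σ : ℝ) (hσ : 0 < σ)
    (μ : Measure (EuclideanSpace ℝ (Fin d))) [IsProbabilityMeasure μ]
    (P : Finset (EuclideanSpace ℝ (Fin d))) (hP : P.Nonempty)
    (x : EuclideanSpace ℝ (Fin d)) :
    DK σ μ (Measure.dirac x) ≤ Real.sqrt 2 * Kpow σ P hP μ x := by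
  classical
  obtain ⟨p₀, hp₀, hinf⟩ := Finset.exists_mem_eq_inf' hP
    (fun p => DKpt σ p x ^ 2 + dKmu σ μ p ^ 2)
  have hinf' : P.inf' hP (fun p => DKpt σ p x ^ 2 + dKmu σ μ p ^ 2)
      = DKpt σ p₀ x ^ 2 + dKmu σ μ p₀ ^ 2 := hinf
  have hgle : gaussK σ p₀ x ≤ σ ^ 2 := by
    rw [gaussK]
    have hexp : Real.exp (-‖p₀ - x‖ ^ 2 / (2 * σ ^ 2)) ≤ 1 := by
      rw [Real.exp_le_one_iff]
      have h := div_nonneg (sq_nonneg ‖p₀ - x‖) (by positivity : (0:ℝ) ≤ 2 * σ ^ 2)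
      rw [neg_div]
      linarith
    nlinarith [sq_nonneg σ]
  have h1 : 0 ≤ kap σ μ μ + σ ^ 2 - 2 * kde σ μ p₀ := by
    have h := KPD.quad μ hσ 1 (-1) 0 p₀ x
    nlinarith [h]
  have h2 : 0 ≤ kap σ μ μ + 5 * σ ^ 2 - 4 * kde σ μ p₀ + 2 * kde σ μ x
      - 4 * gaussK σ p₀ x := by
    have h := KPD.quad μ hσ 1 (-2) 1 p₀ x
    nlinarith [h]
  have hDK : DK σ μ (Measure.dirac x)
      = Real.sqrt (kap σ μ μ + σ ^ 2 - 2 * kde σ μ x) := by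
    rw [DK, KPD.kap_dirac_dirac, KPD.kap_dirac_right, KPD.gaussK_self]
  have hDKpt : DKpt σ p₀ x ^ 2 = 2 * σ ^ 2 - 2 * gaussK σ p₀ x := by
    rw [DKpt, DK, KPD.kap_dirac_dirac, KPD.kap_dirac_dirac, KPD.kap_dirac_dirac,
      KPD.gaussK_self, KPD.gaussK_self, Real.sq_sqrt (by linarith)]
    ring
  have hdmu : dKmu σ μ p₀ ^ 2 = kap σ μ μ + σ ^ 2 - 2 * kde σ μ p₀ := by
    rw [dKmu, DK, KPD.kap_dirac_dirac, KPD.kap_dirac_right, KPD.gaussK_self,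
      Real.sq_sqrt h1]
  have hKpow : Kpow σ P hP μ x = Real.sqrt ((2 * σ ^ 2 - 2 * gaussK σ p₀ x)
      + (kap σ μ μ + σ ^ 2 - 2 * kde σ μ p₀)) := by
    rw [Kpow, hinf', hDKpt, hdmu]
  rw [hDK, hKpow, ← Real.sqrt_mul (by norm_num : (0:ℝ) ≤ 2)]
  apply Real.sqrt_le_sqrt
  linarith
end

section
/- Let μ be a probability measure on ℝ^d and let p₊ ∈ ℝ^d satisfy κ(μ, δ_q) ≤ κ(μ, δ_{p₊}) for all q ∈ ℝ^d (i.e., p₊ maximizes kde_μ over ℝ^d). Then for every x ∈ ℝ^d, D_K(p₊, x) ≤ 2·D_K(μ, δ_x). -/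
open MeasureTheory

namespace KDEAux

open Real

variable {d : ℕ}
local notation "E" => EuclideanSpace ℝ (Fin d)


noncomputable def gg (σ : ℝ) (q u : E) : ℝ := Real.exp (-(σ ^ 2)⁻¹ * ‖q - u‖ ^ 2)

lemma gg_nonneg (σ : ℝ) (q u : E) : 0 ≤ gg σ q u := (Real.exp_pos _).le

lemma gg_le_one {σ : ℝ} (hσ : 0 < σ) (q u : E) : gg σ q u ≤ 1 := by
  rw [gg, Real.exp_le_one_iff]
  have h1 : (0:ℝ) < (σ ^ 2)⁻¹ := by positivity
  nlinarith [sq_nonneg ‖q - u‖]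

lemma gg_cont (σ : ℝ) : Continuous (fun z : E × E => gg σ z.1 z.2) := by
  apply Real.continuous_exp.comp
  exact (continuous_const.mul ((continuous_fst.sub continuous_snd).norm.pow 2))

lemma norm_identity (p x u : E) :
    ‖p - u‖ ^ 2 + ‖x - u‖ ^ 2
      = ‖p - x‖ ^ 2 / 2 + 2 * ‖u - (2⁻¹ : ℝ) • (p + x)‖ ^ 2 := by
  simp only [norm_sub_sq_real, norm_smul, mul_pow, norm_add_sq_real, inner_smul_right,
    inner_add_right, real_inner_comm u p, real_inner_comm u x, real_inner_comm x p,
    Real.norm_eq_abs]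
  rw [abs_of_pos (by norm_num : (0:ℝ) < 2⁻¹)]
  ring

lemma gg_mul (σ : ℝ) (p x u : E) :
    gg σ p u * gg σ x u
      = Real.exp (-‖p - x‖ ^ 2 / (2 * σ ^ 2))
        * Real.exp (-(2 / σ ^ 2) * ‖u - (2⁻¹ : ℝ) • (p + x)‖ ^ 2) := by
  rw [gg, gg, ← Real.exp_add, ← Real.exp_add]
  congr 1
  linear_combination (-(σ ^ 2)⁻¹) * norm_identity p x u

lemma integrable_gauss {b : ℝ} (hb : 0 < b) :
    Integrable (fun v : E => Real.exp (-b * ‖v‖ ^ 2)) := by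
  have h := GaussianFourier.integrable_cexp_neg_mul_sq_norm_add
    (V := E) (b := (b : ℂ)) (by simpa using hb) 0 0
  have h2 : Integrable (fun v : E => (Complex.exp ((-b * ‖v‖ ^ 2 : ℝ) : ℂ)).re) := by
    apply Integrable.re (𝕜 := ℂ)
    convert h using 2 with v
    push_cast
    ring
  have h3 : (fun v : E => Real.exp (-b * ‖v‖ ^ 2))
      = fun v : E => (Complex.exp ((-b * ‖v‖ ^ 2 : ℝ) : ℂ)).re := by
    ext v; rw [Complex.exp_ofReal_re]
  rw [h3]; exact h2

lemma integral_gauss {b : ℝ} (hb : 0 < b) :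
    ∫ v : E, Real.exp (-b * ‖v‖ ^ 2) = (π / b) ^ (d / 2 : ℝ) := by
  rw [GaussianFourier.integral_rexp_neg_mul_sq_norm hb, finrank_euclideanSpace_fin]

lemma integrable_gauss_shift {b : ℝ} (hb : 0 < b) (m : E) :
    Integrable (fun u : E => Real.exp (-b * ‖u - m‖ ^ 2)) :=
  (integrable_gauss hb).comp_sub_right m

lemma integral_gauss_shift {b : ℝ} (hb : 0 < b) (m : E) :
    ∫ u : E, Real.exp (-b * ‖u - m‖ ^ 2) = (π / b) ^ (d / 2 : ℝ) := by
  rw [integral_sub_right_eq_self (fun v : E => Real.exp (-b * ‖v‖ ^ 2)) m]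
  exact integral_gauss hb

lemma integrable_gg {σ : ℝ} (hσ : 0 < σ) (q : E) :
    Integrable (fun u : E => gg σ q u) := by
  have : (fun u : E => gg σ q u) = fun u : E => Real.exp (-(σ ^ 2)⁻¹ * ‖u - q‖ ^ 2) := by
    ext u; rw [gg, norm_sub_rev]
  rw [this]
  exact integrable_gauss_shift (by positivity) q

lemma integral_gg {σ : ℝ} (hσ : 0 < σ) (q : E) :
    ∫ u : E, gg σ q u = (π * σ ^ 2) ^ (d / 2 : ℝ) := by
  have : (fun u : E => gg σ q u) = fun u : E => Real.exp (-(σ ^ 2)⁻¹ * ‖u - q‖ ^ 2) := by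
    ext u; rw [gg, norm_sub_rev]
  rw [this, integral_gauss_shift (by positivity) q]
  congr 1
  field_simp

/-- the convolution identity: the kernel as an L² pairing of Gaussians -/
lemma gg_conv {σ : ℝ} (hσ : 0 < σ) (p x : E) :
    ∫ u : E, gg σ p u * gg σ x u
      = (π * σ ^ 2 / 2) ^ (d / 2 : ℝ) * Real.exp (-‖p - x‖ ^ 2 / (2 * σ ^ 2)) := by
  simp only [gg_mul σ p x]
  rw [MeasureTheory.integral_const_mul, integral_gauss_shift (by positivity) _]
  rw [mul_comm]
  congr 2
  field_simp



noncomputable def FF (σ : ℝ) (μ : Measure E) (u : E) : ℝ := ∫ q, gg σ q u ∂μ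

lemma cont_gg_left (σ : ℝ) (u : E) : Continuous fun q : E => gg σ q u := by
  unfold gg; fun_prop

lemma cont_gg_right (σ : ℝ) (q : E) : Continuous fun u : E => gg σ q u := by
  unfold gg; fun_prop

lemma integrable_gg_mu {σ : ℝ} (hσ : 0 < σ) (μ : Measure E) [IsProbabilityMeasure μ] (u : E) :
    Integrable (fun q : E => gg σ q u) μ := by
  refine Integrable.mono' (integrable_const 1) ((cont_gg_left σ u).aestronglyMeasurable) ?_
  filter_upwards with q
  rw [Real.norm_of_nonneg (gg_nonneg σ q u)]
  exact gg_le_one hσ q u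

lemma FF_nonneg (σ : ℝ) (μ : Measure E) (u : E) : 0 ≤ FF σ μ u :=
  integral_nonneg fun q => gg_nonneg σ q u

lemma FF_le_one {σ : ℝ} (hσ : 0 < σ) (μ : Measure E) [IsProbabilityMeasure μ] (u : E) :
    FF σ μ u ≤ 1 := by
  have := integral_mono (integrable_gg_mu hσ μ u) (integrable_const (1:ℝ))
    (fun q => gg_le_one hσ q u)
  simpa [FF] using this

lemma FF_sm (σ : ℝ) (μ : Measure E) [SFinite μ] : StronglyMeasurable (FF σ μ) := by
  have : StronglyMeasurable fun z : E × E => gg σ z.2 z.1 :=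
    ((gg_cont σ).comp continuous_swap).stronglyMeasurable
  exact this.integral_prod_right'

lemma integrable_prod_gg {σ : ℝ} (hσ : 0 < σ) (μ : Measure E) [IsProbabilityMeasure μ] :
    Integrable (fun z : E × E => gg σ z.1 z.2) (μ.prod volume) := by
  refine (integrable_prod_iff (gg_cont σ).aestronglyMeasurable).2 ⟨?_, ?_⟩
  · filter_upwards with q
    exact integrable_gg hσ q
  · have : (fun q : E => ∫ u : E, ‖gg σ q u‖) = fun _ : E => (π * σ ^ 2) ^ (d / 2 : ℝ) := by
      ext q
      rw [← integral_gg hσ q]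
      congr 1 with u
      exact Real.norm_of_nonneg (gg_nonneg σ q u)
    rw [this]
    exact integrable_const _

lemma integrable_FF {σ : ℝ} (hσ : 0 < σ) (μ : Measure E) [IsProbabilityMeasure μ] :
    Integrable (FF σ μ) := by
  have h := (integrable_prod_gg hσ μ).integral_prod_right
  exact h

noncomputable def Cg (d : ℕ) (σ : ℝ) : ℝ := (π * σ ^ 2 / 2) ^ (d / 2 : ℝ)

lemma Cg_pos {σ : ℝ} (hσ : 0 < σ) : 0 < Cg d σ := by
  apply Real.rpow_pos_of_pos
  positivity

lemma gaussK_symm (σ : ℝ) (p x : E) : gaussK σ p x = gaussK σ x p := by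
  rw [gaussK, gaussK, norm_sub_rev]

/-- M1 -/
lemma int_gg_gg {σ : ℝ} (hσ : 0 < σ) (p x : E) :
    ∫ u : E, gg σ p u * gg σ x u = Cg d σ / σ ^ 2 * gaussK σ p x := by
  rw [gg_conv hσ p x, gaussK, Cg]
  field_simp

/-- integrability of gg-product in u -/
lemma integrable_gg_gg {σ : ℝ} (hσ : 0 < σ) (p x : E) :
    Integrable (fun u : E => gg σ p u * gg σ x u) := by
  refine Integrable.mono' (integrable_gg hσ p)
    (((cont_gg_right σ p).mul (cont_gg_right σ x)).aestronglyMeasurable) ?_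
  filter_upwards with u
  rw [Real.norm_of_nonneg (mul_nonneg (gg_nonneg σ p u) (gg_nonneg σ x u))]
  calc gg σ p u * gg σ x u ≤ gg σ p u * 1 :=
        mul_le_mul_of_nonneg_left (gg_le_one hσ x u) (gg_nonneg σ p u)
    _ = gg σ p u := mul_one _

lemma integrable_gg_FF {σ : ℝ} (hσ : 0 < σ) (μ : Measure E) [IsProbabilityMeasure μ] (p : E) :
    Integrable (fun u : E => gg σ p u * FF σ μ u) := by
  refine Integrable.mono' (integrable_gg hσ p)
    (((cont_gg_right σ p).stronglyMeasurable.mul (FF_sm σ μ)).aestronglyMeasurable) ?_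
  filter_upwards with u
  rw [Real.norm_of_nonneg (mul_nonneg (gg_nonneg σ p u) (FF_nonneg σ μ u))]
  calc gg σ p u * FF σ μ u ≤ gg σ p u * 1 :=
        mul_le_mul_of_nonneg_left (FF_le_one hσ μ u) (gg_nonneg σ p u)
    _ = gg σ p u := mul_one _

lemma integrable_FF_FF {σ : ℝ} (hσ : 0 < σ) (μ : Measure E) [IsProbabilityMeasure μ] :
    Integrable (fun u : E => FF σ μ u * FF σ μ u) := by
  refine Integrable.mono' (integrable_FF hσ μ)
    (((FF_sm σ μ).mul (FF_sm σ μ)).aestronglyMeasurable) ?_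
  filter_upwards with u
  rw [Real.norm_of_nonneg (mul_nonneg (FF_nonneg σ μ u) (FF_nonneg σ μ u))]
  calc FF σ μ u * FF σ μ u ≤ FF σ μ u * 1 :=
        mul_le_mul_of_nonneg_left (FF_le_one hσ μ u) (FF_nonneg σ μ u)
    _ = FF σ μ u := mul_one _

/-- M2 -/
lemma int_gg_FF {σ : ℝ} (hσ : 0 < σ) (μ : Measure E) [IsProbabilityMeasure μ] (x : E) :
    ∫ u : E, gg σ x u * FF σ μ u = Cg d σ / σ ^ 2 * kde σ μ x := by
  have step1 : ∫ u : E, gg σ x u * FF σ μ u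
      = ∫ u : E, ∫ q, gg σ x u * gg σ q u ∂μ := by
    congr 1 with u
    rw [FF, MeasureTheory.integral_const_mul]
  rw [step1]
  have hint : Integrable (Function.uncurry fun (u q : E) => gg σ x u * gg σ q u)
      (volume.prod μ) := by
    refine (integrable_prod_iff ?_).2 ⟨?_, ?_⟩
    · apply Continuous.aestronglyMeasurable
      show Continuous fun z : E × E => gg σ x z.1 * gg σ z.2 z.1
      unfold gg; fun_prop
    · simp only [Function.uncurry_apply_pair]
      filter_upwards with u
      exact (integrable_gg_mu hσ μ u).const_mul (gg σ x u)
    · simp only [Function.uncurry_apply_pair]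
      have heq : (fun u : E => ∫ q, ‖gg σ x u * gg σ q u‖ ∂μ)
          = fun u : E => gg σ x u * FF σ μ u := by
        ext u
        rw [FF, ← MeasureTheory.integral_const_mul]
        congr 1 with q
        exact Real.norm_of_nonneg (mul_nonneg (gg_nonneg σ x u) (gg_nonneg σ q u))
      rw [heq]
      exact integrable_gg_FF hσ μ x
  rw [integral_integral_swap hint]
  have inner : ∀ q : E, (∫ u : E, gg σ x u * gg σ q u)
      = Cg d σ / σ ^ 2 * gaussK σ q x := by
    intro q
    rw [show (fun u : E => gg σ x u * gg σ q u) = fun u : E => gg σ q u * gg σ x u from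
      funext fun u => mul_comm _ _]
    exact int_gg_gg hσ q x
  rw [show (fun q : E => ∫ u : E, gg σ x u * gg σ q u)
      = fun q : E => Cg d σ / σ ^ 2 * gaussK σ q x from funext inner]
  rw [MeasureTheory.integral_const_mul, kde]

set_option maxHeartbeats 1000000 in
/-- M3 -/
lemma int_FF_FF {σ : ℝ} (hσ : 0 < σ) (μ : Measure E) [IsProbabilityMeasure μ] :
    ∫ u : E, FF σ μ u * FF σ μ u = Cg d σ / σ ^ 2 * kap σ μ μ := by
  have step1 : ∫ u : E, FF σ μ u * FF σ μ u
      = ∫ u : E, ∫ q, gg σ q u * FF σ μ u ∂μ := by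
    congr 1 with u
    rw [MeasureTheory.integral_mul_const]
    rfl
  rw [step1]
  have hint : Integrable (Function.uncurry fun (u q : E) => gg σ q u * FF σ μ u)
      (volume.prod μ) := by
    refine (integrable_prod_iff ?_).2 ⟨?_, ?_⟩
    · show AEStronglyMeasurable (fun z : E × E => gg σ z.2 z.1 * FF σ μ z.1) (volume.prod μ)
      apply AEStronglyMeasurable.mul
      · apply Continuous.aestronglyMeasurable
        unfold gg; fun_prop
      · exact ((FF_sm σ μ).comp_measurable measurable_fst).aestronglyMeasurable
    · simp only [Function.uncurry_apply_pair]
      filter_upwards with u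
      exact (integrable_gg_mu hσ μ u).mul_const (FF σ μ u)
    · simp only [Function.uncurry_apply_pair]
      have heq : (fun u : E => ∫ q, ‖gg σ q u * FF σ μ u‖ ∂μ)
          = fun u : E => FF σ μ u * FF σ μ u := by
        ext u
        have : ∀ q : E, ‖gg σ q u * FF σ μ u‖ = gg σ q u * FF σ μ u := fun q =>
          Real.norm_of_nonneg (mul_nonneg (gg_nonneg σ q u) (FF_nonneg σ μ u))
        rw [show (fun q : E => ‖gg σ q u * FF σ μ u‖) = fun q => gg σ q u * FF σ μ u from
          funext this]
        rw [MeasureTheory.integral_mul_const, ← FF, mul_comm]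
      rw [heq]
      exact integrable_FF_FF hσ μ
  rw [integral_integral_swap hint]
  have inner : ∀ q : E, (∫ u : E, gg σ q u * FF σ μ u) = Cg d σ / σ ^ 2 * kde σ μ q :=
    fun q => int_gg_FF hσ μ q
  rw [show (fun q : E => ∫ u : E, gg σ q u * FF σ μ u)
      = fun q : E => Cg d σ / σ ^ 2 * kde σ μ q from funext inner]
  rw [MeasureTheory.integral_const_mul]
  congr 1
  rw [kap]
  congr 1 with p
  rw [kde]
  congr 1 with q
  exact gaussK_symm σ q p

lemma gaussK_self (σ : ℝ) (x : E) : gaussK σ x x = σ ^ 2 := by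
  simp [gaussK]

lemma integrable_fh {σ : ℝ} (hσ : 0 < σ) (μ : Measure E) [IsProbabilityMeasure μ] (p x : E) :
    Integrable (fun u : E =>
      (gg σ p u - FF σ μ u) * (gg σ x u - FF σ μ u)) := by
  have heq : (fun u : E => (gg σ p u - FF σ μ u) * (gg σ x u - FF σ μ u))
      = fun u : E => (gg σ p u * gg σ x u - gg σ p u * FF σ μ u)
          - (gg σ x u * FF σ μ u - FF σ μ u * FF σ μ u) := by
    ext u; ring
  rw [heq]
  exact ((integrable_gg_gg hσ p x).sub (integrable_gg_FF hσ μ p)).sub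
    ((integrable_gg_FF hσ μ x).sub (integrable_FF_FF hσ μ))

lemma int_fh {σ : ℝ} (hσ : 0 < σ) (μ : Measure E) [IsProbabilityMeasure μ] (p x : E) :
    ∫ u : E, (gg σ p u - FF σ μ u) * (gg σ x u - FF σ μ u)
      = Cg d σ / σ ^ 2 * (gaussK σ p x - kde σ μ p - kde σ μ x + kap σ μ μ) := by
  have heq : (fun u : E => (gg σ p u - FF σ μ u) * (gg σ x u - FF σ μ u))
      = fun u : E => (gg σ p u * gg σ x u - gg σ p u * FF σ μ u)
          - (gg σ x u * FF σ μ u - FF σ μ u * FF σ μ u) := by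
    ext u; ring
  have i1 : Integrable (fun u : E => gg σ p u * gg σ x u - gg σ p u * FF σ μ u) :=
    (integrable_gg_gg hσ p x).sub (integrable_gg_FF hσ μ p)
  have i2 : Integrable (fun u : E => gg σ x u * FF σ μ u - FF σ μ u * FF σ μ u) :=
    (integrable_gg_FF hσ μ x).sub (integrable_FF_FF hσ μ)
  rw [heq, integral_sub i1 i2,
    integral_sub (integrable_gg_gg hσ p x) (integrable_gg_FF hσ μ p),
    integral_sub (integrable_gg_FF hσ μ x) (integrable_FF_FF hσ μ),
    int_gg_gg hσ p x, int_gg_FF hσ μ p, int_gg_FF hσ μ x, int_FF_FF hσ μ]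
  ring

lemma quad_nonneg {σ : ℝ} (hσ : 0 < σ) (μ : Measure E) [IsProbabilityMeasure μ] (p x : E)
    (t : ℝ) :
    0 ≤ (∫ u : E, (gg σ p u - FF σ μ u) * (gg σ p u - FF σ μ u)) * (t * t)
        + (2 * ∫ u : E, (gg σ p u - FF σ μ u) * (gg σ x u - FF σ μ u)) * t
        + ∫ u : E, (gg σ x u - FF σ μ u) * (gg σ x u - FF σ μ u) := by
  have key : (∫ u : E, (gg σ p u - FF σ μ u) * (gg σ p u - FF σ μ u)) * (t * t)
        + (2 * ∫ u : E, (gg σ p u - FF σ μ u) * (gg σ x u - FF σ μ u)) * t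
        + ∫ u : E, (gg σ x u - FF σ μ u) * (gg σ x u - FF σ μ u)
      = ∫ u : E, (t * (gg σ p u - FF σ μ u) + (gg σ x u - FF σ μ u))
          * (t * (gg σ p u - FF σ μ u) + (gg σ x u - FF σ μ u)) := by
    have expand : (fun u : E => (t * (gg σ p u - FF σ μ u) + (gg σ x u - FF σ μ u))
          * (t * (gg σ p u - FF σ μ u) + (gg σ x u - FF σ μ u)))
        = fun u : E => (t * t) * ((gg σ p u - FF σ μ u) * (gg σ p u - FF σ μ u))
            + ((2 * t) * ((gg σ p u - FF σ μ u) * (gg σ x u - FF σ μ u))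
              + (gg σ x u - FF σ μ u) * (gg σ x u - FF σ μ u)) := by
      ext u; ring
    have j1 : Integrable (fun u : E =>
        (t * t) * ((gg σ p u - FF σ μ u) * (gg σ p u - FF σ μ u))) :=
      (integrable_fh hσ μ p p).const_mul (t * t)
    have j2 : Integrable (fun u : E =>
        (2 * t) * ((gg σ p u - FF σ μ u) * (gg σ x u - FF σ μ u))) :=
      (integrable_fh hσ μ p x).const_mul (2 * t)
    have j3 : Integrable (fun u : E =>
        (gg σ x u - FF σ μ u) * (gg σ x u - FF σ μ u)) := integrable_fh hσ μ x x
    have j4 : Integrable (fun u : E =>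
        (2 * t) * ((gg σ p u - FF σ μ u) * (gg σ x u - FF σ μ u))
          + (gg σ x u - FF σ μ u) * (gg σ x u - FF σ μ u)) := j2.add j3
    rw [expand, integral_add j1 j4, integral_add j2 j3,
      MeasureTheory.integral_const_mul, MeasureTheory.integral_const_mul]
    ring
  rw [key]
  exact integral_nonneg fun u => mul_self_nonneg _

lemma cauchy_schwarz {σ : ℝ} (hσ : 0 < σ) (μ : Measure E) [IsProbabilityMeasure μ] (p x : E) :
    (gaussK σ p x - kde σ μ p - kde σ μ x + kap σ μ μ) ^ 2
      ≤ (σ ^ 2 - 2 * kde σ μ p + kap σ μ μ) * (σ ^ 2 - 2 * kde σ μ x + kap σ μ μ) := by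
  set c := Cg d σ / σ ^ 2 with hc_def
  have hc : 0 < c := div_pos (Cg_pos hσ) (by positivity)
  have hquad := quad_nonneg hσ μ p x
  have hd := discrim_le_zero hquad
  rw [discrim] at hd
  have hIf := int_fh hσ μ p p
  have hIh := int_fh hσ μ x x
  have hIfh := int_fh hσ μ p x
  rw [hIf, hIh, hIfh] at hd
  simp only [gaussK_self] at hd
  have h3 : c * c * ((gaussK σ p x - kde σ μ p - kde σ μ x + kap σ μ μ) ^ 2)
      ≤ c * c * ((σ ^ 2 - 2 * kde σ μ p + kap σ μ μ)
        * (σ ^ 2 - 2 * kde σ μ x + kap σ μ μ)) := by nlinarith [hd]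
  exact le_of_mul_le_mul_left h3 (mul_pos hc hc)

lemma b_nonneg {σ : ℝ} (hσ : 0 < σ) (μ : Measure E) [IsProbabilityMeasure μ] (x : E) :
    0 ≤ σ ^ 2 - 2 * kde σ μ x + kap σ μ μ := by
  have h0 : 0 ≤ ∫ u : E, (gg σ x u - FF σ μ u) * (gg σ x u - FF σ μ u) :=
    integral_nonneg fun u => mul_self_nonneg _
  rw [int_fh hσ μ x x, gaussK_self] at h0
  have hc : 0 < Cg d σ / σ ^ 2 := div_pos (Cg_pos hσ) (by positivity)
  nlinarith [h0, hc]

lemma kap_mu_dirac (σ : ℝ) (μ : Measure E) (x : E) :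
    kap σ μ (Measure.dirac x) = kde σ μ x := by
  rw [kap, kde]
  congr 1 with p
  exact integral_dirac (fun q => gaussK σ p q) x

lemma kap_dirac_dirac (σ : ℝ) (p x : E) :
    kap σ (Measure.dirac p) (Measure.dirac x) = gaussK σ p x := by
  rw [kap, integral_dirac (fun p' => ∫ q, gaussK σ p' q ∂(Measure.dirac x)) p,
    integral_dirac]

theorem max_point_kernel_distance_bound' (σ : ℝ) (hσ : 0 < σ)
    (μ : Measure E) [IsProbabilityMeasure μ]
    (pPlus : E)
    (hmax : ∀ q : E, kap σ μ (Measure.dirac q) ≤ kap σ μ (Measure.dirac pPlus)) :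
    ∀ x : E, DKpt σ pPlus x ≤ 2 * DK σ μ (Measure.dirac x) := by
  intro x
  have hts : kde σ μ x ≤ kde σ μ pPlus := by
    have := hmax x
    rwa [kap_mu_dirac, kap_mu_dirac] at this
  set A := kap σ μ μ with hA
  set s := kde σ μ pPlus with hs
  set t := kde σ μ x with ht
  set K := gaussK σ pPlus x with hK
  have hcs := cauchy_schwarz hσ μ pPlus x
  have ha := b_nonneg hσ μ pPlus
  have hb := b_nonneg hσ μ x
  set a := σ ^ 2 - 2 * s + A with ha_def
  set b := σ ^ 2 - 2 * t + A with hb_def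
  have hab : a ≤ b := by rw [ha_def, hb_def]; linarith
  have hmain : 2 * σ ^ 2 - 2 * K ≤ 4 * b := by
    nlinarith [hcs, ha, hb, hab, sq_nonneg ((K - s - t + A) + b),
      mul_nonneg hb (sub_nonneg.2 hab)]
  have hDKpt : DKpt σ pPlus x = Real.sqrt (2 * σ ^ 2 - 2 * K) := by
    rw [DKpt, DK, kap_dirac_dirac, kap_dirac_dirac, kap_dirac_dirac, gaussK_self,
      gaussK_self]
    congr 1
    ring
  have hDK : DK σ μ (Measure.dirac x) = Real.sqrt b := by
    rw [DK, kap_dirac_dirac, gaussK_self, kap_mu_dirac]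
    congr 1
    rw [hb_def]
    ring
  rw [hDKpt, hDK]
  have h4 : Real.sqrt (2 * σ ^ 2 - 2 * K) ≤ Real.sqrt (4 * b) :=
    Real.sqrt_le_sqrt hmain
  have h5 : Real.sqrt (4 * b) = 2 * Real.sqrt b := by
    rw [show (4 : ℝ) = 2 ^ 2 by norm_num, Real.sqrt_mul (by positivity) b,
      Real.sqrt_sq (by norm_num : (0:ℝ) ≤ 2)]
  linarith [h4, h5.le, h5.ge]


end KDEAux

/-- If `p₊` maximizes `kde_μ` (equivalently `κ(μ,δ_·)`) over `ℝ^d`,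
then `D_K(p₊, x) ≤ 2·D_K(μ, δ_x)` for every `x`. -/
theorem max_point_kernel_distance_bound {d : ℕ} (hd : 1 ≤ d) (σ : ℝ) (hσ : 0 < σ)
    (μ : Measure (EuclideanSpace ℝ (Fin d))) [IsProbabilityMeasure μ]
    (pPlus : EuclideanSpace ℝ (Fin d))
    (hmax : ∀ q : EuclideanSpace ℝ (Fin d),
      kap σ μ (Measure.dirac q) ≤ kap σ μ (Measure.dirac pPlus)) :
    ∀ x : EuclideanSpace ℝ (Fin d),
      DKpt σ pPlus x ≤ 2 * DK σ μ (Measure.dirac x) := by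
  exact fun x => KDEAux.max_point_kernel_distance_bound' σ hσ μ pPlus hmax x
end

section
/- Let P ⊆ ℝ^d be a finite nonempty set with empirical measure μ_P, let p₊ ∈ ℝ^d satisfy κ(μ_P, δ_q) ≤ κ(μ_P, δ_{p₊}) for all q ∈ ℝ^d (i.e., p₊ maximizes kde_{μ_P}), and suppose p̂₊ ∈ ℝ^d satisfies D_K(μ_P, δ_{p̂₊}) ≤ (3/2)·D_K(μ_P, δ_{p₊}). Then for every x ∈ ℝ^d, Kpow_{P ∪ {p̂₊}}(μ_P, x) ≤ √71 · D_K(μ_P, δ_x). -/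
open MeasureTheory

open scoped Classical in
/-- The empirical measure of a finite nonempty point set: mass `1/|P|` at each point of `P`. -/
noncomputable def empMeasure {d : ℕ} (P : Finset (EuclideanSpace ℝ (Fin d))) :
    Measure (EuclideanSpace ℝ (Fin d)) :=
  (P.card : ENNReal)⁻¹ • ∑ p ∈ P, Measure.dirac p


namespace KPDaux

open Real

variable {d : ℕ}

local notation "E" => EuclideanSpace ℝ (Fin d)

lemma gaussK_symm (σ : ℝ) (p q : E) : gaussK σ p q = gaussK σ q p := by
  simp [gaussK, norm_sub_rev]

lemma gaussK_self (σ : ℝ) (p : E) : gaussK σ p p = σ ^ 2 := by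
  simp [gaussK]

noncomputable def phi (σ : ℝ) (p z : E) : ℝ := rexp (-‖p - z‖ ^ 2 / σ ^ 2)

lemma phi_mul (σ : ℝ) (hσ : 0 < σ) (p q z : E) :
    phi σ p z * phi σ q z
      = rexp (-‖p - q‖ ^ 2 / (2 * σ ^ 2))
        * rexp (-(2 / σ ^ 2) * ‖z - (2:ℝ)⁻¹ • (p + q)‖ ^ 2) := by
  set m : E := (2:ℝ)⁻¹ • (p + q) with hm
  rw [phi, phi, ← Real.exp_add, ← Real.exp_add]
  congr 1
  have par := parallelogram_law_with_norm ℝ (p - z) (q - z)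
  have h1 : p - z + (q - z) = (2:ℝ) • (m - z) := by rw [hm]; module
  have h2 : p - z - (q - z) = p - q := by abel
  rw [h1, h2, norm_smul] at par
  have h3 : ‖(2:ℝ)‖ = 2 := by norm_num
  rw [h3, norm_sub_rev m z] at par
  have hσ2 : σ ^ 2 ≠ 0 := by positivity
  field_simp
  linear_combination par

lemma integrable_g {σ : ℝ} (hσ : 0 < σ) (m : E) :
    Integrable (fun z : E => rexp (-(2 / σ ^ 2) * ‖z - m‖ ^ 2)) := by
  have hb : (0:ℝ) < 2 / σ ^ 2 := by positivity
  have h0 := GaussianFourier.integrable_cexp_neg_mul_sq_norm_add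
      (V := E) (b := ((2 / σ ^ 2 : ℝ) : ℂ)) (by rw [Complex.ofReal_re]; exact hb) 0 0
  have h1 : Integrable (fun v : E => rexp (-(2 / σ ^ 2) * ‖v‖ ^ 2)) := by
    apply h0.re.congr
    filter_upwards with v
    have : (-((2 / σ ^ 2 : ℝ):ℂ) * ‖v‖ ^ 2 + 0 * ((inner ℝ (0 : E) v : ℝ) : ℂ))
        = ((-(2 / σ ^ 2) * ‖v‖ ^ 2 : ℝ) : ℂ) := by push_cast; ring
    rw [this]; exact Complex.exp_ofReal_re _
  exact h1.comp_sub_right m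

lemma integrable_phi_mul {σ : ℝ} (hσ : 0 < σ) (p q : E) :
    Integrable (fun z : E => phi σ p z * phi σ q z) := by
  have := (integrable_g hσ ((2:ℝ)⁻¹ • (p + q))).const_mul
      (rexp (-‖p - q‖ ^ 2 / (2 * σ ^ 2)))
  exact this.congr (by filter_upwards with z using (phi_mul σ hσ p q z).symm)

lemma key_repr {σ : ℝ} (hσ : 0 < σ) (p q : E) :
    gaussK σ p q = σ ^ 2 * (∫ z : E, rexp (-(2 / σ ^ 2) * ‖z‖ ^ 2))⁻¹
      * ∫ z : E, phi σ p z * phi σ q z := by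
  have hb : (0:ℝ) < 2 / σ ^ 2 := by positivity
  have hI : ∫ z : E, rexp (-(2 / σ ^ 2) * ‖z‖ ^ 2)
      = (π / (2 / σ ^ 2)) ^ ((Module.finrank ℝ E : ℝ) / 2) :=
    GaussianFourier.integral_rexp_neg_mul_sq_norm hb
  have hIpos : 0 < ∫ z : E, rexp (-(2 / σ ^ 2) * ‖z‖ ^ 2) := by
    rw [hI]; positivity
  have hint : ∫ z : E, phi σ p z * phi σ q z
      = rexp (-‖p - q‖ ^ 2 / (2 * σ ^ 2)) * ∫ z : E, rexp (-(2 / σ ^ 2) * ‖z‖ ^ 2) := by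
    calc ∫ z : E, phi σ p z * phi σ q z
        = ∫ z : E, rexp (-‖p - q‖ ^ 2 / (2 * σ ^ 2))
            * rexp (-(2 / σ ^ 2) * ‖z - (2:ℝ)⁻¹ • (p + q)‖ ^ 2) := by
          congr 1; funext z; exact phi_mul σ hσ p q z
      _ = rexp (-‖p - q‖ ^ 2 / (2 * σ ^ 2))
            * ∫ z : E, rexp (-(2 / σ ^ 2) * ‖z - (2:ℝ)⁻¹ • (p + q)‖ ^ 2) :=
          integral_const_mul _ _
      _ = _ := by
          rw [integral_sub_right_eq_self (fun z : E => rexp (-(2 / σ ^ 2) * ‖z‖ ^ 2))]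
  set I := ∫ z : E, rexp (-(2 / σ ^ 2) * ‖z‖ ^ 2) with hIdef
  rw [gaussK, hint]
  field_simp

/-- the quadratic form associated to the kernel on a finite point set -/
noncomputable def S (σ : ℝ) (T : Finset (EuclideanSpace ℝ (Fin d))) (u v : E → ℝ) : ℝ :=
  ∑ p ∈ T, ∑ q ∈ T, u p * v q * gaussK σ p q

lemma S_nonneg {σ : ℝ} (hσ : 0 < σ) (T : Finset (EuclideanSpace ℝ (Fin d))) (u : E → ℝ) :
    0 ≤ S σ T u u := by
  have hb : (0:ℝ) < 2 / σ ^ 2 := by positivity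
  set I := ∫ z : E, rexp (-(2 / σ ^ 2) * ‖z‖ ^ 2) with hIdef
  have hIpos : 0 < I := by
    rw [hIdef, GaussianFourier.integral_rexp_neg_mul_sq_norm hb]; positivity
  set f : E → E → ℝ := fun p z => u p * phi σ p z with hf
  have hint2 : ∀ p q : E, Integrable (fun z : E => f p z * f q z) := by
    intro p q
    apply ((integrable_phi_mul hσ p q).const_mul (u p * u q)).congr
    filter_upwards with z
    simp only [hf]; ring
  have hterm : ∀ p q : E, u p * u q * gaussK σ p q = σ ^ 2 * I⁻¹ * ∫ z : E, f p z * f q z := by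
    intro p q
    rw [key_repr hσ p q, ← hIdef,
      show (∫ z : E, f p z * f q z) = (u p * u q) * ∫ z : E, phi σ p z * phi σ q z by
        rw [← integral_const_mul]; congr 1; funext z; simp only [hf]; ring]
    ring
  calc (0:ℝ) ≤ σ ^ 2 * I⁻¹ * ∫ z : E, (∑ p ∈ T, f p z) ^ 2 := by
        apply mul_nonneg (by positivity)
        exact integral_nonneg fun z => sq_nonneg _
    _ = σ ^ 2 * I⁻¹ * ∫ z : E, ∑ p ∈ T, ∑ q ∈ T, f p z * f q z := by
        congr 1; congr 1; funext z
        rw [sq, Finset.sum_mul_sum]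
    _ = σ ^ 2 * I⁻¹ * ∑ p ∈ T, ∫ z : E, ∑ q ∈ T, f p z * f q z := by
        congr 1
        exact integral_finset_sum T fun p _ => integrable_finset_sum T fun q _ => hint2 p q
    _ = σ ^ 2 * I⁻¹ * ∑ p ∈ T, ∑ q ∈ T, ∫ z : E, f p z * f q z := by
        congr 1
        exact Finset.sum_congr rfl fun p _ => integral_finset_sum T fun q _ => hint2 p q
    _ = ∑ p ∈ T, ∑ q ∈ T, σ ^ 2 * I⁻¹ * ∫ z : E, f p z * f q z := by
        simp_rw [Finset.mul_sum]
    _ = S σ T u u := by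
        exact Finset.sum_congr rfl fun p _ => Finset.sum_congr rfl fun q _ => (hterm p q).symm

lemma S_symm (σ : ℝ) (T : Finset (EuclideanSpace ℝ (Fin d))) (u v : E → ℝ) :
    S σ T u v = S σ T v u := by
  rw [S, S, Finset.sum_comm]
  refine Finset.sum_congr rfl fun q _ => Finset.sum_congr rfl fun p _ => ?_
  rw [gaussK_symm σ p q]; ring

lemma S_expand (σ : ℝ) (T : Finset (EuclideanSpace ℝ (Fin d))) (u v : E → ℝ) (t : ℝ) :
    S σ T (fun p => u p + t * v p) (fun p => u p + t * v p)
      = S σ T u u + t * S σ T u v + t * S σ T v u + t ^ 2 * S σ T v v := by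
  simp only [S, Finset.mul_sum, ← Finset.sum_add_distrib]
  refine Finset.sum_congr rfl fun p _ => Finset.sum_congr rfl fun q _ => ?_
  ring

lemma S_eval (σ : ℝ) (T : Finset (EuclideanSpace ℝ (Fin d))) (u v : E → ℝ) :
    S σ T u v = ∑ p ∈ T, u p * ∑ q ∈ T, v q * gaussK σ p q := by
  simp_rw [S, Finset.mul_sum, mul_assoc]

lemma S_cs {σ : ℝ} (hσ : 0 < σ) (T : Finset (EuclideanSpace ℝ (Fin d))) (u v : E → ℝ) :
    S σ T u v ≤ Real.sqrt (S σ T u u) * Real.sqrt (S σ T v v) := by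
  have huu := S_nonneg hσ T u
  have hvv := S_nonneg hσ T v
  have hq : ∀ t : ℝ, 0 ≤ S σ T v v * (t * t) + (2 * S σ T u v) * t + S σ T u u := by
    intro t
    have h := S_nonneg hσ T (fun p => u p + t * v p)
    rw [S_expand σ T u v t, S_symm σ T v u] at h
    nlinarith [h]
  have hd := discrim_le_zero hq
  rw [discrim] at hd
  have h1 : (S σ T u v) ^ 2 ≤ S σ T u u * S σ T v v := by nlinarith [hd]
  calc S σ T u v ≤ |S σ T u v| := le_abs_self _
    _ = Real.sqrt ((S σ T u v) ^ 2) := (Real.sqrt_sq_eq_abs _).symm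
    _ ≤ Real.sqrt (S σ T u u * S σ T v v) := Real.sqrt_le_sqrt h1
    _ = _ := Real.sqrt_mul huu _

lemma S_triangle {σ : ℝ} (hσ : 0 < σ) (T : Finset (EuclideanSpace ℝ (Fin d))) (u v : E → ℝ) :
    Real.sqrt (S σ T (fun p => u p + v p) (fun p => u p + v p))
      ≤ Real.sqrt (S σ T u u) + Real.sqrt (S σ T v v) := by
  have h1 : S σ T (fun p => u p + v p) (fun p => u p + v p)
      ≤ (Real.sqrt (S σ T u u) + Real.sqrt (S σ T v v)) ^ 2 := by
    have he := S_expand σ T u v 1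
    simp only [one_mul, one_pow] at he
    rw [he, S_symm σ T v u]
    have hcs := S_cs hσ T u v
    nlinarith [Real.sq_sqrt (S_nonneg hσ T u), Real.sq_sqrt (S_nonneg hσ T v)]
  calc Real.sqrt (S σ T (fun p => u p + v p) (fun p => u p + v p))
      ≤ Real.sqrt ((Real.sqrt (S σ T u u) + Real.sqrt (S σ T v v)) ^ 2) :=
        Real.sqrt_le_sqrt h1
    _ = _ := Real.sqrt_sq (by positivity)

lemma S_neg (σ : ℝ) (T : Finset (EuclideanSpace ℝ (Fin d))) (u : E → ℝ) :
    S σ T (fun p => -u p) (fun p => -u p) = S σ T u u := by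
  refine Finset.sum_congr rfl fun p _ => Finset.sum_congr rfl fun q _ => ?_
  ring

lemma integrable_dirac' (f : E → ℝ) (a : E) : Integrable f (Measure.dirac a) :=
  (integrable_const (f a)).congr (MeasureTheory.ae_eq_dirac f).symm

lemma integral_empMeasure (P : Finset (EuclideanSpace ℝ (Fin d))) (f : E → ℝ) :
    ∫ x, f x ∂(empMeasure P) = (P.card : ℝ)⁻¹ * ∑ p ∈ P, f p := by
  rw [empMeasure, integral_smul_measure,
    integral_finset_sum_measure (fun p _ => integrable_dirac' f p)]
  simp [integral_dirac, smul_eq_mul]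

lemma kap_dirac_dirac (σ : ℝ) (y z : E) :
    kap σ (Measure.dirac y) (Measure.dirac z) = gaussK σ y z := by
  rw [kap, integral_dirac (fun p => ∫ q, gaussK σ p q ∂(Measure.dirac z)) y,
    integral_dirac (fun q => gaussK σ y q) z]

lemma kap_emp_dirac (σ : ℝ) (P : Finset (EuclideanSpace ℝ (Fin d))) (y : E) :
    kap σ (empMeasure P) (Measure.dirac y)
      = (P.card : ℝ)⁻¹ * ∑ p ∈ P, gaussK σ p y := by
  rw [kap]
  simp_rw [integral_dirac]
  exact integral_empMeasure P (fun p => gaussK σ p y)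

lemma kap_emp_emp (σ : ℝ) (P : Finset (EuclideanSpace ℝ (Fin d))) :
    kap σ (empMeasure P) (empMeasure P)
      = (P.card : ℝ)⁻¹ * ∑ p ∈ P, ((P.card : ℝ)⁻¹ * ∑ q ∈ P, gaussK σ p q) := by
  rw [kap]
  have h : ∀ p : E, ∫ q, gaussK σ p q ∂(empMeasure P)
      = (P.card : ℝ)⁻¹ * ∑ q ∈ P, gaussK σ p q :=
    fun p => integral_empMeasure P (gaussK σ p)
  simp_rw [h]
  exact integral_empMeasure P _

end KPDaux

open scoped Classical in
/-- If `p₊` maximizes `kde_{μ_P}` over `ℝ^d` and `p̂₊` satisfies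
`D_K(μ_P, δ_{p̂₊}) ≤ (3/2)·D_K(μ_P, δ_{p₊})`, then for every `x`,
`Kpow_{P ∪ {p̂₊}}(μ_P, x) ≤ √71 · D_K(μ_P, δ_x)`. -/
theorem kernel_power_distance_hatPPlus {d : ℕ} (hd : 1 ≤ d) (σ : ℝ) (hσ : 0 < σ)
    (P : Finset (EuclideanSpace ℝ (Fin d))) (hP : P.Nonempty)
    (pPlus phat : EuclideanSpace ℝ (Fin d))
    (hmax : ∀ q : EuclideanSpace ℝ (Fin d),
      kap σ (empMeasure P) (Measure.dirac q) ≤ kap σ (empMeasure P) (Measure.dirac pPlus))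
    (hphat : DK σ (empMeasure P) (Measure.dirac phat)
      ≤ (3 / 2) * DK σ (empMeasure P) (Measure.dirac pPlus)) :
    ∀ x : EuclideanSpace ℝ (Fin d),
      Kpow σ (insert phat P) (Finset.insert_nonempty _ _) (empMeasure P) x
        ≤ Real.sqrt 71 * DK σ (empMeasure P) (Measure.dirac x) := by
  intro x
  classical
  set μP := empMeasure P with hμP
  set T : Finset (EuclideanSpace ℝ (Fin d)) := insert phat (insert x P) with hT
  set w : EuclideanSpace ℝ (Fin d) → ℝ :=
    fun p => if p ∈ P then (P.card : ℝ)⁻¹ else 0 with hw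
  set δ : EuclideanSpace ℝ (Fin d) → EuclideanSpace ℝ (Fin d) → ℝ :=
    fun y p => if p = y then 1 else 0 with hδ
  have hPT : P ⊆ T := fun p hp => Finset.mem_insert_of_mem (Finset.mem_insert_of_mem hp)
  have hxt : x ∈ T := Finset.mem_insert_of_mem (Finset.mem_insert_self x P)
  have hphatT : phat ∈ T := Finset.mem_insert_self _ _
  -- sum helpers
  have hsum_δ : ∀ y ∈ T, ∀ f : EuclideanSpace ℝ (Fin d) → ℝ,
      ∑ q ∈ T, δ y q * f q = f y := by
    intro y hy f
    rw [Finset.sum_eq_single y]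
    · simp [hδ]
    · intro b _ hb; simp [hδ, hb]
    · intro h; exact absurd hy h
  have hsum_w : ∀ f : EuclideanSpace ℝ (Fin d) → ℝ,
      ∑ q ∈ T, w q * f q = (P.card : ℝ)⁻¹ * ∑ q ∈ P, f q := by
    intro f
    have h0 : ∑ q ∈ P, w q * f q = ∑ q ∈ T, w q * f q :=
      Finset.sum_subset hPT (fun q _ hq => by simp [hw, hq])
    rw [← h0, Finset.mul_sum]
    exact Finset.sum_congr rfl fun q hq => by simp [hw, hq]
  -- evaluations of the quadratic form
  have hSδδ : ∀ y ∈ T, ∀ z ∈ T, KPDaux.S σ T (δ y) (δ z) = gaussK σ y z := by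
    intro y hy z hz
    rw [KPDaux.S_eval, hsum_δ y hy (fun p => ∑ q ∈ T, δ z q * gaussK σ p q)]
    exact hsum_δ z hz _
  have hSwδ : ∀ z ∈ T, KPDaux.S σ T w (δ z) = kap σ μP (Measure.dirac z) := by
    intro z hz
    rw [KPDaux.S_eval, hsum_w (fun p => ∑ q ∈ T, δ z q * gaussK σ p q), hμP,
      KPDaux.kap_emp_dirac]
    congr 1
    exact Finset.sum_congr rfl fun p _ => hsum_δ z hz _
  have hSδw : ∀ z ∈ T, KPDaux.S σ T (δ z) w = kap σ μP (Measure.dirac z) := by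
    intro z hz; rw [KPDaux.S_symm]; exact hSwδ z hz
  have hSww : KPDaux.S σ T w w = kap σ μP μP := by
    rw [KPDaux.S_eval, hsum_w (fun p => ∑ q ∈ T, w q * gaussK σ p q), hμP, KPDaux.kap_emp_emp]
    congr 1
    exact Finset.sum_congr rfl fun p _ => hsum_w (fun q => gaussK σ p q)
  -- the squared kernel distance to μP as a quadratic form
  have hrep : ∀ y ∈ T,
      kap σ μP μP + σ ^ 2 - 2 * kap σ μP (Measure.dirac y)
        = KPDaux.S σ T (fun p => δ y p + (-1) * w p) (fun p => δ y p + (-1) * w p) := by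
    intro y hy
    rw [KPDaux.S_expand, hSδδ y hy y hy, hSδw y hy, hSwδ y hy, hSww, KPDaux.gaussK_self]
    ring
  have hs_nonneg : ∀ y ∈ T,
      0 ≤ kap σ μP μP + σ ^ 2 - 2 * kap σ μP (Measure.dirac y) := by
    intro y hy
    rw [hrep y hy]
    exact KPDaux.S_nonneg hσ T _
  have hDKy : ∀ y : EuclideanSpace ℝ (Fin d), DK σ μP (Measure.dirac y)
      = Real.sqrt (kap σ μP μP + σ ^ 2 - 2 * kap σ μP (Measure.dirac y)) := by
    intro y
    rw [DK, KPDaux.kap_dirac_dirac, KPDaux.gaussK_self]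
  -- triangle inequality through μP
  have hDKpt_eq : DKpt σ phat x
      = Real.sqrt (KPDaux.S σ T
          (fun p => (δ phat p + (-1) * w p) + (w p + (-1) * δ x p))
          (fun p => (δ phat p + (-1) * w p) + (w p + (-1) * δ x p))) := by
    have hcomb : (fun p => (δ phat p + (-1) * w p) + (w p + (-1) * δ x p))
        = fun p => δ phat p + (-1) * δ x p := funext fun p => by ring
    rw [DKpt, DK, KPDaux.kap_dirac_dirac, KPDaux.kap_dirac_dirac, KPDaux.kap_dirac_dirac,
      hcomb]
    congr 1
    rw [KPDaux.S_expand, hSδδ phat hphatT phat hphatT, hSδδ phat hphatT x hxt,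
      hSδδ x hxt phat hphatT, hSδδ x hxt x hxt, KPDaux.gaussK_self, KPDaux.gaussK_self,
      KPDaux.gaussK_symm σ x phat]
    ring
  have hvneg : KPDaux.S σ T (fun p => w p + (-1) * δ x p) (fun p => w p + (-1) * δ x p)
      = KPDaux.S σ T (fun p => δ x p + (-1) * w p) (fun p => δ x p + (-1) * w p) := by
    have hcomb : (fun p => w p + (-1) * δ x p) = fun p => -(δ x p + (-1) * w p) :=
      funext fun p => by ring
    rw [hcomb, KPDaux.S_neg]
  have htri : DKpt σ phat x
      ≤ Real.sqrt (kap σ μP μP + σ ^ 2 - 2 * kap σ μP (Measure.dirac phat))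
        + Real.sqrt (kap σ μP μP + σ ^ 2 - 2 * kap σ μP (Measure.dirac x)) := by
    rw [hDKpt_eq, hrep phat hphatT, hrep x hxt, ← hvneg]
    exact KPDaux.S_triangle hσ T _ _
  -- numeric bounds
  set A : ℝ := kap σ μP μP + σ ^ 2 - 2 * kap σ μP (Measure.dirac phat) with hA
  set C : ℝ := kap σ μP μP + σ ^ 2 - 2 * kap σ μP (Measure.dirac x) with hC
  have hA0 : 0 ≤ A := hs_nonneg phat hphatT
  have hC0 : 0 ≤ C := hs_nonneg x hxt
  have hac : Real.sqrt A ≤ 3 / 2 * Real.sqrt C := by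
    rw [hDKy phat, hDKy pPlus] at hphat
    have h1 : Real.sqrt (kap σ μP μP + σ ^ 2 - 2 * kap σ μP (Measure.dirac pPlus))
        ≤ Real.sqrt C := Real.sqrt_le_sqrt (by have := hmax x; rw [hC]; linarith)
    calc Real.sqrt A ≤ _ := hphat
      _ ≤ 3 / 2 * Real.sqrt C := by linarith [h1]
  have hDKpt_nonneg : 0 ≤ DKpt σ phat x := by
    rw [DKpt, DK]; exact Real.sqrt_nonneg _
  have hD2 : DKpt σ phat x ^ 2 ≤ (Real.sqrt A + Real.sqrt C) ^ 2 :=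
    pow_le_pow_left₀ hDKpt_nonneg htri 2
  have hdKmu2 : dKmu σ μP phat ^ 2 = A := by
    rw [dKmu, hDKy phat]
    exact Real.sq_sqrt hA0
  have hfphat : DKpt σ phat x ^ 2 + dKmu σ μP phat ^ 2 ≤ 71 * C := by
    have ha2 : Real.sqrt A ^ 2 = A := Real.sq_sqrt hA0
    have hc2 : Real.sqrt C ^ 2 = C := Real.sq_sqrt hC0
    have han : 0 ≤ Real.sqrt A := Real.sqrt_nonneg _
    have hcn : 0 ≤ Real.sqrt C := Real.sqrt_nonneg _
    rw [hdKmu2]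
    nlinarith [hD2, hac, ha2, hc2, han, hcn]
  -- conclude
  have hinf : (insert phat P).inf' (Finset.insert_nonempty _ _)
      (fun p => DKpt σ p x ^ 2 + dKmu σ μP p ^ 2) ≤ 71 * C :=
    le_trans (Finset.inf'_le _ (Finset.mem_insert_self phat P)) hfphat
  calc Kpow σ (insert phat P) (Finset.insert_nonempty _ _) μP x
      ≤ Real.sqrt (71 * C) := by
        rw [Kpow]
        exact Real.sqrt_le_sqrt hinf
    _ = Real.sqrt 71 * Real.sqrt C := Real.sqrt_mul (by norm_num) _
    _ = Real.sqrt 71 * DK σ μP (Measure.dirac x) := by rw [hDKy x]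
end

section
/- For any points p, q ∈ ℝ^d it always holds that D_K(p,q) ≤ ‖p − q‖; moreover, if ‖p − q‖ ≤ √3·σ, then D_K(p,q) ≥ ‖p − q‖/2. -/
open MeasureTheory

/-- `D_K(p,q) ≤ ‖p − q‖` always, and if `‖p − q‖ ≤ √3·σ` then `D_K(p,q) ≥ ‖p − q‖/2`. -/
theorem kernel_distance_vs_euclidean {d : ℕ} (hd : 1 ≤ d) (σ : ℝ) (hσ : 0 < σ)
    (p q : EuclideanSpace ℝ (Fin d)) :
    DKpt σ p q ≤ ‖p - q‖ ∧
    (‖p - q‖ ≤ Real.sqrt 3 * σ → ‖p - q‖ / 2 ≤ DKpt σ p q) := by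

  have hσ2 : (0:ℝ) < σ ^ 2 := by positivity
  set r : ℝ := ‖p - q‖ with hr
  have hr0 : 0 ≤ r := norm_nonneg _
  set s : ℝ := r ^ 2 / (2 * σ ^ 2) with hs
  have hs0 : 0 ≤ s := by positivity
  have hD : DKpt σ p q = Real.sqrt (2 * σ ^ 2 * (1 - Real.exp (-s))) := by
    simp only [DKpt, DK, kap, integral_dirac, gaussK, sub_self, norm_zero,
      Real.exp_zero]
    congr 1
    rw [← hr, hs]
    norm_num
    field_simp
    ring
  constructor
  · rw [hD]
    have h1 : 1 - Real.exp (-s) ≤ s := by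
      have := Real.add_one_le_exp (-s)
      linarith
    have hle : 2 * σ ^ 2 * (1 - Real.exp (-s)) ≤ r ^ 2 := by
      have hrs : r ^ 2 = 2 * σ ^ 2 * s := by
        rw [hs]; field_simp
      nlinarith
    calc Real.sqrt (2 * σ ^ 2 * (1 - Real.exp (-s))) ≤ Real.sqrt (r ^ 2) :=
          Real.sqrt_le_sqrt hle
      _ = r := by rw [Real.sqrt_sq hr0]
  · intro hle
    rw [hD]
    have hs32 : s ≤ 3 / 2 := by
      have hr2 : r ^ 2 ≤ 3 * σ ^ 2 := by
        have h3 : Real.sqrt 3 * σ ≥ 0 := by positivity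
        have := Real.sq_sqrt (by norm_num : (3:ℝ) ≥ 0).le
        nlinarith [Real.sq_sqrt (by norm_num : (0:ℝ) ≤ 3)]
      rw [hs, div_le_iff₀ (by positivity)]
      nlinarith
    -- convexity bound: exp(-s) ≤ (1 - 2s/3) + (2s/3) * exp(-3/2)
    have hconv : Real.exp (-s) ≤ (1 - 2 * s / 3) + (2 * s / 3) * Real.exp (-(3/2)) := by
      have h := convexOn_exp.2 (Set.mem_univ (0:ℝ)) (Set.mem_univ (-(3/2):ℝ))
        (show (0:ℝ) ≤ 1 - 2 * s / 3 by linarith) (show (0:ℝ) ≤ 2 * s / 3 by linarith)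
        (show (1 - 2 * s / 3) + 2 * s / 3 = 1 by ring)
      have harg : (1 - 2 * s / 3) • (0:ℝ) + (2 * s / 3) • (-(3/2):ℝ) = -s := by
        simp [smul_eq_mul]; ring
      rw [harg] at h
      simpa [smul_eq_mul, Real.exp_zero] using h
    have hexp : Real.exp (-(3/2 : ℝ)) ≤ 5 / 8 := by
      have h1 : (1:ℝ) + 3/2 ≤ Real.exp (3/2) := by
        have := Real.add_one_le_exp (3/2 : ℝ); linarith
      have h2 : Real.exp (-(3/2:ℝ)) = 1 / Real.exp (3/2) := by
        rw [Real.exp_neg]; ring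
      rw [h2]
      rw [div_le_iff₀ (Real.exp_pos _)]
      nlinarith
    have hkey : Real.exp (-s) ≤ 1 - s / 4 := by nlinarith
    have hrs : r ^ 2 = 2 * σ ^ 2 * s := by rw [hs]; field_simp
    have hsq : (r / 2) ^ 2 ≤ 2 * σ ^ 2 * (1 - Real.exp (-s)) := by nlinarith
    calc r / 2 = Real.sqrt ((r / 2) ^ 2) := (Real.sqrt_sq (by positivity)).symm
      _ ≤ _ := Real.sqrt_le_sqrt hsq
end
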